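/- arXiv:1311.6367 — 6 statements merged into one kernel-verified Lean document; each statement's English description precedes it below -/
import Mathlib

section
/- Let (P_μ)_{μ∈𝒫(E)} be a nonlinear Markov transition kernel family on a measurable space (E,ℰ) satisfying the global nonlinear Dobrushin condition with constant α ∈ (0,1] and the measure-Lipschitz condition with constant λ, where 0 ≤ λ ≤ α. Then there exists a unique probability measure π ∈ 𝒫(E) with P_π π = π. -/
open MeasureTheory ProbabilityTheory

/-- Total variation distance between (finite) measures:
`d_TV(μ,ν) = 2 ⨆_{A measurable} |μ(A) − ν(A)|`. -/
noncomputable def dTV {E : Type*} [MeasurableSpace E] (μ ν : Measure E) : ℝ :=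
  2 * ⨆ A : {A : Set E // MeasurableSet A}, |(μ A.1).toReal - (ν A.1).toReal|

namespace DTVAux

open Filter Topology

variable {E : Type*} [MeasurableSpace E]

lemma toReal_le_one (μ : Measure E) [IsProbabilityMeasure μ] (A : Set E) :
    (μ A).toReal ≤ 1 := by
  have h := prob_le_one (μ := μ) (s := A)
  simpa using ENNReal.toReal_mono (by simp) h

lemma bdd (μ ν : Measure E) [IsProbabilityMeasure μ] [IsProbabilityMeasure ν] :
    BddAbove (Set.range fun A : {A : Set E // MeasurableSet A} =>
      |(μ A.1).toReal - (ν A.1).toReal|) := by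
  refine ⟨1, fun x hx => ?_⟩
  obtain ⟨A, rfl⟩ := hx
  rw [abs_sub_le_iff]
  constructor
  · have : (0:ℝ) ≤ (ν A.1).toReal := ENNReal.toReal_nonneg
    linarith [toReal_le_one μ A.1]
  · have : (0:ℝ) ≤ (μ A.1).toReal := ENNReal.toReal_nonneg
    linarith [toReal_le_one ν A.1]

lemma abs_le_half (μ ν : Measure E) [IsProbabilityMeasure μ] [IsProbabilityMeasure ν]
    {A : Set E} (hA : MeasurableSet A) :
    |(μ A).toReal - (ν A).toReal| ≤ dTV μ ν / 2 := by
  have h := le_ciSup (bdd μ ν) ⟨A, hA⟩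
  rw [dTV]; linarith

lemma dTV_le (μ ν : Measure E) {c : ℝ}
    (h : ∀ A : Set E, MeasurableSet A → |(μ A).toReal - (ν A).toReal| ≤ c) :
    dTV μ ν ≤ 2 * c := by
  rw [dTV]
  have : Nonempty {A : Set E // MeasurableSet A} := ⟨⟨∅, MeasurableSet.empty⟩⟩
  have h2 : (⨆ A : {A : Set E // MeasurableSet A}, |(μ A.1).toReal - (ν A.1).toReal|) ≤ c :=
    ciSup_le fun A => h A.1 A.2
  linarith

lemma dTV_comm (μ ν : Measure E) : dTV μ ν = dTV ν μ := by
  rw [dTV, dTV]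
  congr 1
  exact iSup_congr fun A => abs_sub_comm _ _

lemma dTV_nonneg (μ ν : Measure E) [IsProbabilityMeasure μ] [IsProbabilityMeasure ν] :
    0 ≤ dTV μ ν := by
  have := abs_le_half μ ν MeasurableSet.empty
  have h0 : (0:ℝ) ≤ |(μ ∅).toReal - (ν ∅).toReal| := abs_nonneg _
  linarith

lemma dTV_le_two (μ ν : Measure E) [IsProbabilityMeasure μ] [IsProbabilityMeasure ν] :
    dTV μ ν ≤ 2 := by
  have := dTV_le μ ν (c := 1) (fun A hA => by
    rw [abs_sub_le_iff]
    constructor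
    · linarith [toReal_le_one μ A, ENNReal.toReal_nonneg (a := ν A)]
    · linarith [toReal_le_one ν A, ENNReal.toReal_nonneg (a := μ A)])
  linarith

lemma eq_of_dTV_nonpos (μ ν : Measure E) [IsProbabilityMeasure μ] [IsProbabilityMeasure ν]
    (h : dTV μ ν ≤ 0) : μ = ν := by
  ext A hA
  have h1 := abs_le_half μ ν hA
  have h2 : |(μ A).toReal - (ν A).toReal| = 0 := le_antisymm (by linarith) (abs_nonneg _)
  have h3 : (μ A).toReal = (ν A).toReal := by
    have := abs_eq_zero.1 h2; linarith
  exact (ENNReal.toReal_eq_toReal_iff' (measure_ne_top μ A) (measure_ne_top ν A)).1 h3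

lemma dTV_triangle (μ ν ξ : Measure E) [IsProbabilityMeasure μ] [IsProbabilityMeasure ν]
    [IsProbabilityMeasure ξ] : dTV μ ξ ≤ dTV μ ν + dTV ν ξ := by
  have h := dTV_le μ ξ (c := dTV μ ν / 2 + dTV ν ξ / 2) (fun A hA => by
    calc |(μ A).toReal - (ξ A).toReal|
        ≤ |(μ A).toReal - (ν A).toReal| + |(ν A).toReal - (ξ A).toReal| := abs_sub_le _ _ _
      _ ≤ dTV μ ν / 2 + dTV ν ξ / 2 := add_le_add (abs_le_half μ ν hA) (abs_le_half ν ξ hA))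
  linarith

lemma intgr {μ : Measure E} [IsFiniteMeasure μ] {f : E → ℝ} (hf : Measurable f)
    (h0 : ∀ x, 0 ≤ f x) (h1 : ∀ x, f x ≤ 1) : Integrable f μ := by
  refine (integrable_const (1:ℝ)).mono' hf.aestronglyMeasurable (ae_of_all _ fun x => ?_)
  rw [Real.norm_eq_abs, abs_of_nonneg (h0 x)]
  exact h1 x

/-- Cross bound: if `|f x - g y| ≤ β` for all `x y` and the two measures have the
same total (real) mass `t`, then `|∫ f dξ₁ - ∫ g dξ₂| ≤ β * t`. -/
lemma cross_bound [Nonempty E] {ξ₁ ξ₂ : Measure E} [IsFiniteMeasure ξ₁] [IsFiniteMeasure ξ₂]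
    {f g : E → ℝ} (hf : Measurable f) (hg : Measurable g)
    (hf0 : ∀ x, 0 ≤ f x) (hf1 : ∀ x, f x ≤ 1) (hg0 : ∀ x, 0 ≤ g x) (hg1 : ∀ x, g x ≤ 1)
    {β : ℝ} (hcross : ∀ x y, |f x - g y| ≤ β)
    {t : ℝ} (h1 : (ξ₁ Set.univ).toReal = t) (h2 : (ξ₂ Set.univ).toReal = t) :
    |∫ x, f x ∂ξ₁ - ∫ x, g x ∂ξ₂| ≤ β * t := by
  have htn : 0 ≤ t := h1 ▸ ENNReal.toReal_nonneg
  have hbg : BddBelow (Set.range g) := ⟨0, fun y ⟨x, hx⟩ => hx ▸ hg0 x⟩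
  have hbf : BddBelow (Set.range f) := ⟨0, fun y ⟨x, hx⟩ => hx ▸ hf0 x⟩
  set c₁ : ℝ := ⨅ y, g y with hc₁
  set c₂ : ℝ := ⨅ y, f y with hc₂
  have hgc : ∀ y, c₁ ≤ g y := fun y => ciInf_le hbg y
  have hfc : ∀ y, c₂ ≤ f y := fun y => ciInf_le hbf y
  have hfup : ∀ x, f x ≤ c₁ + β := fun x => by
    have : ∀ y, f x - β ≤ g y := fun y => by
      have := (abs_le.1 (hcross x y)).2; linarith
    have := le_ciInf this; linarith
  have hgup : ∀ y, g y ≤ c₂ + β := fun y => by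
    have : ∀ x, g y - β ≤ f x := fun x => by
      have := (abs_le.1 (hcross x y)).1; linarith
    have := le_ciInf this; linarith
  have hIf : Integrable f ξ₁ := intgr hf hf0 hf1
  have hIg : Integrable g ξ₂ := intgr hg hg0 hg1
  have hup : ∫ x, f x ∂ξ₁ ≤ (c₁ + β) * t := by
    calc ∫ x, f x ∂ξ₁ ≤ ∫ _, (c₁ + β) ∂ξ₁ := integral_mono hIf (integrable_const _) hfup
      _ = (c₁ + β) * t := by rw [integral_const, smul_eq_mul, measureReal_def, h1, mul_comm]
  have hlo : c₁ * t ≤ ∫ x, g x ∂ξ₂ := by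
    calc c₁ * t = ∫ _, c₁ ∂ξ₂ := by rw [integral_const, smul_eq_mul, measureReal_def, h2, mul_comm]
      _ ≤ ∫ x, g x ∂ξ₂ := integral_mono (integrable_const _) hIg hgc
  have hup' : ∫ x, g x ∂ξ₂ ≤ (c₂ + β) * t := by
    calc ∫ x, g x ∂ξ₂ ≤ ∫ _, (c₂ + β) ∂ξ₂ := integral_mono hIg (integrable_const _) hgup
      _ = (c₂ + β) * t := by rw [integral_const, smul_eq_mul, measureReal_def, h2, mul_comm]
  have hlo' : c₂ * t ≤ ∫ x, f x ∂ξ₁ := by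
    calc c₂ * t = ∫ _, c₂ ∂ξ₁ := by rw [integral_const, smul_eq_mul, measureReal_def, h1, mul_comm]
      _ ≤ ∫ x, f x ∂ξ₁ := integral_mono (integrable_const _) hIf hfc
  rw [abs_le]
  constructor <;> nlinarith

/-- Key estimate -/
lemma main_bound [Nonempty E] (μ ν : Measure E) [IsProbabilityMeasure μ] [IsProbabilityMeasure ν]
    {f g : E → ℝ} (hf : Measurable f) (hg : Measurable g)
    (hf0 : ∀ x, 0 ≤ f x) (hf1 : ∀ x, f x ≤ 1) (hg0 : ∀ x, 0 ≤ g x) (hg1 : ∀ x, g x ≤ 1)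
    {c β : ℝ} (hfg : ∀ x, |f x - g x| ≤ c) (hcross : ∀ x y, |f x - g y| ≤ β) :
    |∫ x, f x ∂μ - ∫ x, g x ∂ν| ≤ c * (1 - dTV μ ν / 2) + β * (dTV μ ν / 2) := by
  obtain ⟨S, hSm, hS1, hS2⟩ := hahn_decomposition (μ := μ) (ν := ν)
  set t0 : ℝ := (μ S).toReal - (ν S).toReal with ht0
  set m : Set E → ℝ := fun A => (μ A).toReal - (ν A).toReal with hm
  have hsplit : ∀ A : Set E, m A = m (A ∩ S) + m (A \ S) := fun A => by
    have h1 : μ (A ∩ S) + μ (A \ S) = μ A := measure_inter_add_diff A hSm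
    have h2 : ν (A ∩ S) + ν (A \ S) = ν A := measure_inter_add_diff A hSm
    have h1' : (μ A).toReal = (μ (A ∩ S)).toReal + (μ (A \ S)).toReal := by
      rw [← h1, ENNReal.toReal_add (measure_ne_top _ _) (measure_ne_top _ _)]
    have h2' : (ν A).toReal = (ν (A ∩ S)).toReal + (ν (A \ S)).toReal := by
      rw [← h2, ENNReal.toReal_add (measure_ne_top _ _) (measure_ne_top _ _)]
    simp only [hm]; linarith
  have hpos : ∀ A : Set E, MeasurableSet A → A ⊆ S → 0 ≤ m A := fun A hA hAS => by
    have := hS1 A hA hAS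
    have := ENNReal.toReal_mono (measure_ne_top μ A) this
    simp only [hm]; linarith
  have hneg : ∀ A : Set E, MeasurableSet A → A ⊆ Sᶜ → m A ≤ 0 := fun A hA hAS => by
    have := hS2 A hA hAS
    have := ENNReal.toReal_mono (measure_ne_top ν A) this
    simp only [hm]; linarith
  have hcompl : ∀ A : Set E, MeasurableSet A → m Aᶜ = - m A := fun A hA => by
    have h1 : (μ A).toReal + (μ Aᶜ).toReal = 1 := by
      rw [← ENNReal.toReal_add (measure_ne_top _ _) (measure_ne_top _ _),
        measure_add_measure_compl hA]
      simp
    have h2 : (ν A).toReal + (ν Aᶜ).toReal = 1 := by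
      rw [← ENNReal.toReal_add (measure_ne_top _ _) (measure_ne_top _ _),
        measure_add_measure_compl hA]
      simp
    simp only [hm]; linarith
  have hub : ∀ A : Set E, MeasurableSet A → m A ≤ t0 := fun A hA => by
    have h1 := hsplit A
    have h3 : m S = m (S ∩ A) + m (S \ A) := by
      have : μ (S ∩ A) + μ (S \ A) = μ S := measure_inter_add_diff S hA
      have h2' : ν (S ∩ A) + ν (S \ A) = ν S := measure_inter_add_diff S hA
      have e1 : (μ S).toReal = (μ (S ∩ A)).toReal + (μ (S \ A)).toReal := by
        rw [← this, ENNReal.toReal_add (measure_ne_top _ _) (measure_ne_top _ _)]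
      have e2 : (ν S).toReal = (ν (S ∩ A)).toReal + (ν (S \ A)).toReal := by
        rw [← h2', ENNReal.toReal_add (measure_ne_top _ _) (measure_ne_top _ _)]
      simp only [hm]; linarith
    have hd1 : m (A \ S) ≤ 0 := hneg _ (hA.diff hSm) (Set.diff_subset_iff.2 (by simp))
    have hd2 : 0 ≤ m (S \ A) := hpos _ (hSm.diff hA) Set.diff_subset
    have hinter : S ∩ A = A ∩ S := Set.inter_comm S A
    have ht0' : m S = t0 := rfl
    rw [hinter] at h3
    linarith
  have habs : ∀ A : Set E, MeasurableSet A → |m A| ≤ t0 := fun A hA => by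
    rw [abs_le]
    refine ⟨?_, hub A hA⟩
    have := hub Aᶜ hA.compl
    rw [hcompl A hA] at this
    linarith
  have hdub : dTV μ ν ≤ 2 * t0 := dTV_le μ ν habs
  have hdlb : 2 * t0 ≤ dTV μ ν := by
    have := abs_le_half μ ν hSm
    have h2 : t0 ≤ |m S| := le_abs_self _
    simp only [hm] at h2
    linarith
  have hd : dTV μ ν = 2 * t0 := le_antisymm hdub hdlb
  set κ₁ : Measure E := μ.restrict S - ν.restrict S with hκ₁
  set κ₂ : Measure E := ν.restrict Sᶜ - μ.restrict Sᶜ with hκ₂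
  set ρ : Measure E := ν.restrict S + μ.restrict Sᶜ with hρ
  have hle1 : ν.restrict S ≤ μ.restrict S := Measure.le_iff.2 fun A hA => by
    rw [Measure.restrict_apply hA, Measure.restrict_apply hA]
    exact hS1 _ (hA.inter hSm) Set.inter_subset_right
  have hle2 : μ.restrict Sᶜ ≤ ν.restrict Sᶜ := Measure.le_iff.2 fun A hA => by
    rw [Measure.restrict_apply hA, Measure.restrict_apply hA]
    exact hS2 _ (hA.inter hSm.compl) Set.inter_subset_right
  have e1 : κ₁ + ν.restrict S = μ.restrict S := Measure.sub_add_cancel_of_le hle1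
  have e2 : κ₂ + μ.restrict Sᶜ = ν.restrict Sᶜ := Measure.sub_add_cancel_of_le hle2
  have hμdec : μ = κ₁ + ρ := by
    rw [hρ, ← add_assoc, e1, Measure.restrict_add_restrict_compl hSm]
  have hνdec : ν = κ₂ + ρ := by
    rw [hρ, add_comm (ν.restrict S) (μ.restrict Sᶜ), ← add_assoc, e2,
      add_comm, Measure.restrict_add_restrict_compl hSm]
  have hκ₁m : (κ₁ Set.univ).toReal = t0 := by
    have : κ₁ Set.univ + (ν.restrict S) Set.univ = (μ.restrict S) Set.univ := by
      rw [← Measure.add_apply, e1]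
    rw [Measure.restrict_apply_univ, Measure.restrict_apply_univ] at this
    have h' : (κ₁ Set.univ).toReal + (ν S).toReal = (μ S).toReal := by
      rw [← ENNReal.toReal_add (measure_ne_top _ _) (measure_ne_top _ _), this]
    linarith
  have hκ₂m : (κ₂ Set.univ).toReal = t0 := by
    have : κ₂ Set.univ + (μ.restrict Sᶜ) Set.univ = (ν.restrict Sᶜ) Set.univ := by
      rw [← Measure.add_apply, e2]
    rw [Measure.restrict_apply_univ, Measure.restrict_apply_univ] at this
    have h' : (κ₂ Set.univ).toReal + (μ Sᶜ).toReal = (ν Sᶜ).toReal := by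
      rw [← ENNReal.toReal_add (measure_ne_top _ _) (measure_ne_top _ _), this]
    have hc := hcompl S hSm
    simp only [hm] at hc
    linarith
  have hρm : (ρ Set.univ).toReal = 1 - t0 := by
    have : ρ Set.univ = ν S + μ Sᶜ := by
      rw [hρ, Measure.add_apply, Measure.restrict_apply_univ, Measure.restrict_apply_univ]
    have h' : (ρ Set.univ).toReal = (ν S).toReal + (μ Sᶜ).toReal := by
      rw [this, ENNReal.toReal_add (measure_ne_top _ _) (measure_ne_top _ _)]
    have hc := hcompl S hSm
    have h1 : (μ S).toReal + (μ Sᶜ).toReal = 1 := by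
      rw [← ENNReal.toReal_add (measure_ne_top _ _) (measure_ne_top _ _),
        measure_add_measure_compl hSm]; simp
    simp only [hm] at hc
    linarith
  have hfinκ₁ : IsFiniteMeasure κ₁ := isFiniteMeasure_of_le (μ.restrict S) Measure.sub_le
  have hfinκ₂ : IsFiniteMeasure κ₂ := isFiniteMeasure_of_le (ν.restrict Sᶜ) Measure.sub_le
  have hfinρ : IsFiniteMeasure ρ := by rw [hρ]; infer_instance
  have hIfκ : Integrable f κ₁ := intgr hf hf0 hf1
  have hIfρ : Integrable f ρ := intgr hf hf0 hf1
  have hIgκ : Integrable g κ₂ := intgr hg hg0 hg1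
  have hIgρ : Integrable g ρ := intgr hg hg0 hg1
  have hfint : ∫ x, f x ∂μ = ∫ x, f x ∂κ₁ + ∫ x, f x ∂ρ := by
    conv_lhs => rw [hμdec]
    exact integral_add_measure hIfκ hIfρ
  have hgint : ∫ x, g x ∂ν = ∫ x, g x ∂κ₂ + ∫ x, g x ∂ρ := by
    conv_lhs => rw [hνdec]
    exact integral_add_measure hIgκ hIgρ
  have hρbd : |∫ x, f x ∂ρ - ∫ x, g x ∂ρ| ≤ c * (1 - t0) := by
    rw [← integral_sub hIfρ hIgρ]
    have := norm_integral_le_of_norm_le_const (μ := ρ) (f := fun x => f x - g x) (C := c)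
      (ae_of_all _ fun x => by rw [Real.norm_eq_abs]; exact hfg x)
    rw [Real.norm_eq_abs] at this
    rw [measureReal_def, hρm] at this
    exact this
  have hκbd : |∫ x, f x ∂κ₁ - ∫ x, g x ∂κ₂| ≤ β * t0 :=
    cross_bound hf hg hf0 hf1 hg0 hg1 hcross hκ₁m hκ₂m
  have hhalf : dTV μ ν / 2 = t0 := by rw [hd]; ring
  rw [hhalf]
  calc |∫ x, f x ∂μ - ∫ x, g x ∂ν|
      = |(∫ x, f x ∂κ₁ - ∫ x, g x ∂κ₂) + (∫ x, f x ∂ρ - ∫ x, g x ∂ρ)| := by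
        rw [hfint, hgint]; ring_nf
    _ ≤ |∫ x, f x ∂κ₁ - ∫ x, g x ∂κ₂| + |∫ x, f x ∂ρ - ∫ x, g x ∂ρ| := abs_add_le _ _
    _ ≤ β * t0 + c * (1 - t0) := add_le_add hκbd hρbd
    _ = c * (1 - t0) + β * t0 := by ring

lemma bind_isProb (μ : Measure E) [IsProbabilityMeasure μ] (κ : Kernel E E)
    [IsMarkovKernel κ] : IsProbabilityMeasure (μ.bind ⇑κ) := by
  constructor
  rw [Measure.bind_apply MeasurableSet.univ κ.measurable.aemeasurable]
  simp

lemma bind_toReal (μ : Measure E) [IsProbabilityMeasure μ] (κ : Kernel E E)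
    [IsMarkovKernel κ] {A : Set E} (hA : MeasurableSet A) :
    ((μ.bind ⇑κ) A).toReal = ∫ x, (κ x A).toReal ∂μ := by
  rw [Measure.bind_apply hA κ.measurable.aemeasurable]
  rw [integral_toReal ((κ.measurable_coe hA).aemeasurable)
    (ae_of_all _ fun x => lt_of_le_of_lt (prob_le_one) (by norm_num))]

lemma real_step {α lam d u : ℝ} (hα0 : 0 < α) (hα1 : α ≤ 1) (hl0 : 0 ≤ lam) (hlα : lam ≤ α)
    (hd0 : 0 ≤ d) (hu : α ≤ u) (hdu : d * (1 + u) ≤ 2) :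
    lam * d * (1 - d / 2) + (1 - α) * d ≤ 2 / (1 + u + α) := by
  have h1u : (0:ℝ) < 1 + u := by linarith
  have h1ua : (0:ℝ) < 1 + u + α := by linarith
  have hde : d ≤ 2 / (1 + u) := by rw [le_div_iff₀ h1u]; exact hdu
  have hd2 : d ≤ 2 := by nlinarith
  have hstep1 : lam * d * (1 - d / 2) + (1 - α) * d ≤ d - α * d ^ 2 / 2 := by
    nlinarith [mul_nonneg (mul_nonneg (sub_nonneg.2 hlα) hd0) (by linarith : (0:ℝ) ≤ 1 - d / 2)]
  set e : ℝ := 2 / (1 + u) with he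
  have hee : e * (1 + u) = 2 := div_mul_cancel₀ 2 (ne_of_gt h1u)
  have he0 : 0 ≤ e := by positivity
  have hαe : α * e ≤ 1 := by nlinarith
  have hstep2 : d - α * d ^ 2 / 2 ≤ e - α * e ^ 2 / 2 := by
    nlinarith [mul_nonneg (sub_nonneg.2 hde) (by nlinarith : (0:ℝ) ≤ 1 - α * (e + d) / 2)]
  have hstep3 : e - α * e ^ 2 / 2 ≤ 2 / (1 + u + α) := by
    rw [le_div_iff₀ h1ua]
    nlinarith [sq_nonneg α, sq_nonneg e, mul_pos h1u h1u]
  linarith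

lemma real_base {α : ℝ} (hα0 : 0 < α) (hα1 : α ≤ 1) :
    2 * (1 - α) ≤ 2 / (1 + α) := by
  rw [le_div_iff₀ (by linarith)]
  nlinarith

section Kernels

variable [Nonempty E] (P : Measure E → Kernel E E) (hMarkov : ∀ μ, IsMarkovKernel (P μ))
    (α lam : ℝ)
    (hDobr : ∀ μ ν : Measure E, IsProbabilityMeasure μ → IsProbabilityMeasure ν →
      ∀ x y : E, dTV ((P μ) x) ((P ν) y) ≤ 2 * (1 - α))
    (hLip : ∀ μ ν : Measure E, IsProbabilityMeasure μ → IsProbabilityMeasure ν →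
      ∀ x : E, dTV ((P μ) x) ((P ν) x) ≤ lam * dTV μ ν)

include hMarkov hDobr hLip in
/-- one-step refined contraction bound -/
lemma step_bound (μ ν : Measure E) [hμp : IsProbabilityMeasure μ] [hνp : IsProbabilityMeasure ν] :
    dTV (μ.bind ⇑(P μ)) (ν.bind ⇑(P ν)) ≤
      lam * dTV μ ν * (1 - dTV μ ν / 2) + (1 - α) * dTV μ ν := by
  haveI := hMarkov μ; haveI := hMarkov ν
  have key : ∀ A : Set E, MeasurableSet A →
      |((μ.bind ⇑(P μ)) A).toReal - ((ν.bind ⇑(P ν)) A).toReal| ≤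
        (lam * dTV μ ν / 2) * (1 - dTV μ ν / 2) + (1 - α) * (dTV μ ν / 2) := by
    intro A hA
    rw [bind_toReal μ (P μ) hA, bind_toReal ν (P ν) hA]
    refine main_bound μ ν ((Kernel.measurable_coe _ hA).ennreal_toReal)
      ((Kernel.measurable_coe _ hA).ennreal_toReal)
      (fun x => ENNReal.toReal_nonneg) (fun x => toReal_le_one _ _)
      (fun x => ENNReal.toReal_nonneg) (fun x => toReal_le_one _ _)
      (fun x => ?_) (fun x y => ?_)
    · have h1 := abs_le_half ((P μ) x) ((P ν) x) hA
      have h2 := hLip μ ν hμp hνp x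
      linarith
    · have h1 := abs_le_half ((P μ) x) ((P ν) y) hA
      have h2 := hDobr μ ν hμp hνp x y
      linarith
  have := dTV_le (μ.bind ⇑(P μ)) (ν.bind ⇑(P ν)) key
  calc dTV (μ.bind ⇑(P μ)) (ν.bind ⇑(P ν))
      ≤ 2 * ((lam * dTV μ ν / 2) * (1 - dTV μ ν / 2) + (1 - α) * (dTV μ ν / 2)) := this
    _ = lam * dTV μ ν * (1 - dTV μ ν / 2) + (1 - α) * dTV μ ν := by ring

include hMarkov hDobr in
/-- one-step coarse Dobrushin bound -/
lemma coarse_bound (μ ν : Measure E) [hμp : IsProbabilityMeasure μ]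
    [hνp : IsProbabilityMeasure ν] :
    dTV (μ.bind ⇑(P μ)) (ν.bind ⇑(P ν)) ≤ 2 * (1 - α) := by
  haveI := hMarkov μ; haveI := hMarkov ν
  have key : ∀ A : Set E, MeasurableSet A →
      |((μ.bind ⇑(P μ)) A).toReal - ((ν.bind ⇑(P ν)) A).toReal| ≤ 1 - α := by
    intro A hA
    rw [bind_toReal μ (P μ) hA, bind_toReal ν (P ν) hA]
    have := cross_bound (ξ₁ := μ) (ξ₂ := ν)
      ((Kernel.measurable_coe (P μ) hA).ennreal_toReal)
      ((Kernel.measurable_coe (P ν) hA).ennreal_toReal)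
      (fun x => ENNReal.toReal_nonneg) (fun x => toReal_le_one _ _)
      (fun x => ENNReal.toReal_nonneg) (fun x => toReal_le_one _ _)
      (β := 1 - α) (fun x y => by
        have h1 := abs_le_half ((P μ) x) ((P ν) y) hA
        have h2 := hDobr μ ν hμp hνp x y
        linarith)
      (t := 1) (by simp) (by simp)
    simpa using this
  have := dTV_le (μ.bind ⇑(P μ)) (ν.bind ⇑(P ν)) key
  linarith

include hMarkov in
lemma iter_prob : ∀ (n : ℕ) (μ : Measure E), IsProbabilityMeasure μ →
    IsProbabilityMeasure ((fun ξ : Measure E => ξ.bind ⇑(P ξ))^[n] μ) := by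
  intro n
  induction n with
  | zero => intro μ hμ; simpa using hμ
  | succ n ih =>
    intro μ hμ
    rw [Function.iterate_succ_apply']
    haveI := ih μ hμ
    haveI := hMarkov ((fun ξ : Measure E => ξ.bind ⇑(P ξ))^[n] μ)
    exact bind_isProb _ _

include hMarkov hDobr hLip in
lemma iter_bound (hα0 : 0 < α) (hα1 : α ≤ 1) (hlam0 : 0 ≤ lam) (hlamα : lam ≤ α) :
    ∀ (k : ℕ) (μ ν : Measure E), IsProbabilityMeasure μ → IsProbabilityMeasure ν →
    dTV ((fun ξ : Measure E => ξ.bind ⇑(P ξ))^[k + 1] μ)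
        ((fun ξ : Measure E => ξ.bind ⇑(P ξ))^[k + 1] ν) ≤ 2 / (1 + α * (k + 1)) := by
  intro k
  induction k with
  | zero =>
    intro μ ν hμ hν
    haveI := hμ; haveI := hν
    have h1 : dTV (μ.bind ⇑(P μ)) (ν.bind ⇑(P ν)) ≤ 2 * (1 - α) :=
      coarse_bound P hMarkov α hDobr μ ν
    have h2 := real_base hα0 hα1
    have h3 : dTV ((fun ξ : Measure E => ξ.bind ⇑(P ξ))^[0 + 1] μ)
        ((fun ξ : Measure E => ξ.bind ⇑(P ξ))^[0 + 1] ν)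
        = dTV (μ.bind ⇑(P μ)) (ν.bind ⇑(P ν)) := by
      norm_num
    rw [h3]
    have h4 : (1 : ℝ) + α * ((0 : ℕ) + 1) = 1 + α := by push_cast; ring
    rw [h4]
    linarith
  | succ k ih =>
    intro μ ν hμ hν
    set Φ : Measure E → Measure E := fun ξ => ξ.bind ⇑(P ξ) with hΦ
    have hiterμ : Φ^[k + 1 + 1] μ = Φ (Φ^[k + 1] μ) := Function.iterate_succ_apply' Φ (k + 1) μ
    have hiterν : Φ^[k + 1 + 1] ν = Φ (Φ^[k + 1] ν) := Function.iterate_succ_apply' Φ (k + 1) ν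
    haveI hpμ : IsProbabilityMeasure (Φ^[k + 1] μ) := iter_prob P hMarkov (k + 1) μ hμ
    haveI hpν : IsProbabilityMeasure (Φ^[k + 1] ν) := iter_prob P hMarkov (k + 1) ν hν
    set d : ℝ := dTV (Φ^[k + 1] μ) (Φ^[k + 1] ν) with hd
    have hdle : d ≤ 2 / (1 + α * (k + 1)) := ih μ ν hμ hν
    have hd0 : 0 ≤ d := dTV_nonneg _ _
    have hstep : dTV (Φ (Φ^[k + 1] μ)) (Φ (Φ^[k + 1] ν)) ≤
        lam * d * (1 - d / 2) + (1 - α) * d :=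
      step_bound P hMarkov α lam hDobr hLip _ _
    have hu : α ≤ α * ((k : ℝ) + 1) := by nlinarith [Nat.cast_nonneg (α := ℝ) k]
    have h1u : (0:ℝ) < 1 + α * ((k : ℝ) + 1) := by linarith
    have hdu : d * (1 + α * ((k : ℝ) + 1)) ≤ 2 := by
      rw [← le_div_iff₀ h1u]; exact hdle
    have hmain := real_step hα0 hα1 hlam0 hlamα hd0 hu hdu
    rw [hiterμ, hiterν]
    have heq : (1 + α * ((k : ℝ) + 1) + α) = 1 + α * (((k + 1 : ℕ) : ℝ) + 1) := by
      push_cast; ring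
    rw [heq] at hmain
    linarith

end Kernels
end DTVAux

open DTVAux Filter Topology

/-- A nonlinear Markov kernel family satisfying the global nonlinear Dobrushin condition
with constant `α ∈ (0,1]` and the measure-Lipschitz condition with constant `lam`,
`0 ≤ lam ≤ α`, has a unique invariant probability measure. -/
theorem stmt0 {E : Type*} [MeasurableSpace E] [Nonempty E]
    (P : Measure E → Kernel E E) (hMarkov : ∀ μ, IsMarkovKernel (P μ))
    (α lam : ℝ) (hα0 : 0 < α) (hα1 : α ≤ 1) (hlam0 : 0 ≤ lam) (hlamα : lam ≤ α)
    (hDobr : ∀ μ ν : Measure E, IsProbabilityMeasure μ → IsProbabilityMeasure ν →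
      ∀ x y : E, dTV ((P μ) x) ((P ν) y) ≤ 2 * (1 - α))
    (hLip : ∀ μ ν : Measure E, IsProbabilityMeasure μ → IsProbabilityMeasure ν →
      ∀ x : E, dTV ((P μ) x) ((P ν) x) ≤ lam * dTV μ ν) :
    ∃! π : Measure E, IsProbabilityMeasure π ∧ π.bind ⇑(P π) = π := by
  classical
  obtain ⟨x0⟩ : Nonempty E := inferInstance
  set Φ : Measure E → Measure E := fun ξ => ξ.bind ⇑(P ξ) with hΦ
  set μs : ℕ → Measure E := fun n => Φ^[n] (Measure.dirac x0) with hμs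
  have hps : ∀ n, IsProbabilityMeasure (μs n) := fun n =>
    iter_prob P hMarkov n _ inferInstance
  set δ : ℕ → ℝ := fun n => 1 / (1 + α * n) with hδdef
  have h1pos : ∀ n : ℕ, (0:ℝ) < 1 + α * n := fun n => by
    have : (0:ℝ) ≤ (n:ℝ) := Nat.cast_nonneg n
    nlinarith
  have hδpos : ∀ n, 0 < δ n := fun n => by
    rw [hδdef]; exact div_pos one_pos (h1pos n)
  have hδanti : ∀ n m : ℕ, n ≤ m → δ m ≤ δ n := fun n m hnm => by
    rw [hδdef]
    apply div_le_div_of_nonneg_left one_pos.le (h1pos n)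
    have : (n:ℝ) ≤ (m:ℝ) := Nat.cast_le.2 hnm
    nlinarith
  have hδ0 : Tendsto δ atTop (𝓝 0) := by
    rw [hδdef]
    simp only [one_div]
    apply Tendsto.inv_tendsto_atTop
    apply tendsto_atTop_add_const_left
    exact (tendsto_natCast_atTop_atTop (R := ℝ)).const_mul_atTop hα0
  -- uniform Cauchy bound
  have hC : ∀ n, 1 ≤ n → ∀ m, n ≤ m → dTV (μs n) (μs m) ≤ 2 * δ n := by
    intro n hn m hnm
    obtain ⟨j, rfl⟩ : ∃ j, n = j + 1 := ⟨n - 1, (Nat.succ_pred_eq_of_pos hn).symm⟩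
    have hm : μs m = Φ^[j + 1] (Φ^[m - (j + 1)] (Measure.dirac x0)) := by
      rw [hμs]
      simp only
      rw [← Function.iterate_add_apply, Nat.add_sub_cancel' hnm]
    have hb := iter_bound P hMarkov α lam hDobr hLip hα0 hα1 hlam0 hlamα j
      (Measure.dirac x0) (Φ^[m - (j + 1)] (Measure.dirac x0)) inferInstance
      (iter_prob P hMarkov _ _ inferInstance)
    rw [← hm] at hb
    have heq : 2 / (1 + α * ((j:ℝ) + 1)) = 2 * δ (j + 1) := by
      rw [hδdef]
      push_cast
      ring
    rw [heq] at hb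
    exact hb
  have hCA : ∀ A : Set E, MeasurableSet A → ∀ n, 1 ≤ n → ∀ m, n ≤ m →
      |((μs n) A).toReal - ((μs m) A).toReal| ≤ δ n := by
    intro A hA n hn m hnm
    haveI := hps n; haveI := hps m
    have h1 := abs_le_half (μs n) (μs m) hA
    have h2 := hC n hn m hnm
    linarith
  -- limit set function
  have hcauchy : ∀ A : Set E, MeasurableSet A → CauchySeq (fun n => ((μs n) A).toReal) := by
    intro A hA
    rw [Metric.cauchySeq_iff']
    intro ε hε
    obtain ⟨N, hN1, hN2⟩ : ∃ N, 1 ≤ N ∧ δ N < ε := by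
      have := ((hδ0.eventually_lt_const hε).and (eventually_ge_atTop 1)).exists
      obtain ⟨N, h1, h2⟩ := this
      exact ⟨N, h2, h1⟩
    refine ⟨N, fun n hn => ?_⟩
    rw [Real.dist_eq, abs_sub_comm]
    calc |((μs N) A).toReal - ((μs n) A).toReal| ≤ δ N := hCA A hA N hN1 n hn
      _ < ε := hN2
  set r : Set E → ℝ := fun A => limUnder atTop (fun n => ((μs n) A).toReal) with hrdef
  have hr : ∀ A : Set E, MeasurableSet A →
      Tendsto (fun n => ((μs n) A).toReal) atTop (𝓝 (r A)) := by
    intro A hA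
    obtain ⟨l, hl⟩ := cauchySeq_tendsto_of_complete (hcauchy A hA)
    have : r A = l := by rw [hrdef]; exact hl.limUnder_eq
    rw [this]; exact hl
  have hr0 : ∀ A : Set E, MeasurableSet A → 0 ≤ r A := fun A hA =>
    ge_of_tendsto' (hr A hA) (fun n => ENNReal.toReal_nonneg)
  have hr1 : ∀ A : Set E, MeasurableSet A → r A ≤ 1 := fun A hA =>
    le_of_tendsto' (hr A hA) (fun n => haveI := hps n; toReal_le_one (μs n) A)
  have hrapprox : ∀ A : Set E, MeasurableSet A → ∀ n, 1 ≤ n →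
      |((μs n) A).toReal - r A| ≤ δ n := by
    intro A hA n hn
    have ht : Tendsto (fun m => |((μs n) A).toReal - ((μs m) A).toReal|) atTop
        (𝓝 |((μs n) A).toReal - r A|) := ((hr A hA).const_sub _).abs
    refine le_of_tendsto ht ?_
    filter_upwards [eventually_ge_atTop n] with m hm
    exact hCA A hA n hn m hm
  have hrmono : ∀ A B : Set E, MeasurableSet A → MeasurableSet B → A ⊆ B → r A ≤ r B := by
    intro A B hA hB hAB
    refine le_of_tendsto_of_tendsto' (hr A hA) (hr B hB) (fun n => ?_)
    exact ENNReal.toReal_mono (measure_ne_top _ _) (measure_mono hAB)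
  have hrempty : r ∅ = 0 := by
    refine tendsto_nhds_unique (hr ∅ MeasurableSet.empty) ?_
    simpa using tendsto_const_nhds (α := ℝ) (f := atTop (α := ℕ)) (a := 0)
  have hruniv : r Set.univ = 1 := by
    refine tendsto_nhds_unique (hr Set.univ MeasurableSet.univ) ?_
    have : ∀ n, ((μs n) Set.univ).toReal = 1 := fun n => by
      haveI := hps n; simp
    simp only [this]
    exact tendsto_const_nhds
  -- countable additivity of r on measurable sets
  have hsigma : ∀ f : ℕ → Set E, (∀ i, MeasurableSet (f i)) → Pairwise (Function.onFun Disjoint f) →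
      ENNReal.ofReal (r (⋃ i, f i)) = ∑' i, ENNReal.ofReal (r (f i)) := by
    intro f hfm hfd
    set g : ℕ → ℕ → ℝ := fun n i => ((μs n) (f i)).toReal with hgdef
    have hUm : MeasurableSet (⋃ i, f i) := MeasurableSet.iUnion hfm
    have hgsum : ∀ n, Summable (g n) := fun n => by
      apply ENNReal.summable_toReal
      rw [← measure_iUnion hfd hfm]
      exact measure_ne_top _ _
    have hgt : ∀ n, ((μs n) (⋃ i, f i)).toReal = ∑' i, g n i := fun n => by
      rw [measure_iUnion hfd hfm, ENNReal.tsum_toReal_eq (fun i => measure_ne_top _ _)]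
    have hbum : ∀ k : ℕ, MeasurableSet (⋃ i ∈ Finset.range k, f i) :=
      fun k => (Finset.range k).measurableSet_biUnion (fun i _ => hfm i)
    have hpart : ∀ n k, ∑ i ∈ Finset.range k, g n i
        = ((μs n) (⋃ i ∈ Finset.range k, f i)).toReal := by
      intro n k
      rw [measure_biUnion_finset (hfd.set_pairwise _) (fun i _ => hfm i),
        ENNReal.toReal_sum (fun i _ => measure_ne_top _ _)]
    have hSk : ∀ k, ∑ i ∈ Finset.range k, r (f i) = r (⋃ i ∈ Finset.range k, f i) := by
      intro k
      have t1 : Tendsto (fun n => ∑ i ∈ Finset.range k, g n i) atTop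
          (𝓝 (∑ i ∈ Finset.range k, r (f i))) :=
        tendsto_finset_sum _ (fun i _ => hr (f i) (hfm i))
      have t2 : Tendsto (fun n => ∑ i ∈ Finset.range k, g n i) atTop
          (𝓝 (r (⋃ i ∈ Finset.range k, f i))) :=
        (hr _ (hbum k)).congr (fun n => (hpart n k).symm)
      exact tendsto_nhds_unique t1 t2
    have hrsum : Summable (fun i => r (f i)) := by
      apply summable_of_sum_range_le (fun i => hr0 _ (hfm i))
      intro k
      rw [hSk k]
      exact hr1 _ (hbum k)
    have hle1 : (∑' i, r (f i)) ≤ r (⋃ i, f i) := by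
      apply Summable.tsum_le_of_sum_range_le hrsum
      intro k
      rw [hSk k]
      exact hrmono _ _ (hbum k) hUm (Set.iUnion₂_subset fun i _ => Set.subset_iUnion f i)
    have hge : r (⋃ i, f i) ≤ ∑' i, r (f i) := by
      have hkey : ∀ n, 1 ≤ n → r (⋃ i, f i) ≤ (∑' i, r (f i)) + 2 * δ n := by
        intro n hn
        have htail0 : Tendsto (fun k => ∑' i, g n (i + k)) atTop (𝓝 0) :=
          tendsto_sum_nat_add (g n)
        have hbd : ∀ k, r (⋃ i, f i) - ((∑' i, r (f i)) + 2 * δ n) ≤ ∑' i, g n (i + k) := by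
          intro k
          have h1 : r (⋃ i, f i) ≤ ((μs n) (⋃ i, f i)).toReal + δ n := by
            have ha := hrapprox _ hUm n hn
            have := (abs_le.1 ha).1
            linarith
          have h2 : ((μs n) (⋃ i, f i)).toReal
              = (∑ i ∈ Finset.range k, g n i) + ∑' i, g n (i + k) := by
            rw [hgt n]
            exact (Summable.sum_add_tsum_nat_add k (hgsum n)).symm
          have h3 : (∑ i ∈ Finset.range k, g n i) ≤ (∑ i ∈ Finset.range k, r (f i)) + δ n := by
            rw [hpart n k, hSk k]
            have ha := hrapprox _ (hbum k) n hn
            have := (abs_le.1 ha).2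
            linarith
          have h4 : (∑ i ∈ Finset.range k, r (f i)) ≤ ∑' i, r (f i) :=
            Summable.sum_le_tsum _ (fun i _ => hr0 _ (hfm i)) hrsum
          linarith
        have := ge_of_tendsto htail0 (Eventually.of_forall hbd)
        linarith
      have htend : Tendsto (fun n => (∑' i, r (f i)) + 2 * δ n) atTop
          (𝓝 ((∑' i, r (f i)) + 2 * 0)) :=
        tendsto_const_nhds.add (hδ0.const_mul 2)
      refine ge_of_tendsto (by simpa using htend) ?_
      filter_upwards [eventually_ge_atTop 1] with n hn
      exact hkey n hn
    have req : r (⋃ i, f i) = ∑' i, r (f i) := le_antisymm hge hle1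
    rw [req, ENNReal.ofReal_tsum_of_nonneg (fun i => hr0 _ (hfm i)) hrsum]
  set π : Measure E := @Measure.ofMeasurable E _ (fun A _ => ENNReal.ofReal (r A))
    (by simp [hrempty]) (fun f hm hd => hsigma f hm hd) with hπdef
  have hπap : ∀ A : Set E, MeasurableSet A → π A = ENNReal.ofReal (r A) := fun A hA =>
    Measure.ofMeasurable_apply A hA
  have hπtoReal : ∀ A : Set E, MeasurableSet A → (π A).toReal = r A := fun A hA => by
    rw [hπap A hA, ENNReal.toReal_ofReal (hr0 A hA)]
  haveI hπprob : IsProbabilityMeasure π := by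
    constructor
    rw [hπap _ MeasurableSet.univ, hruniv]
    simp
  have hdist : ∀ n, 1 ≤ n → dTV (μs n) π ≤ 2 * δ n := by
    intro n hn
    haveI := hps n
    apply dTV_le
    intro A hA
    rw [hπtoReal A hA]
    exact hrapprox A hA n hn
  haveI := hMarkov π
  haveI hΦπ : IsProbabilityMeasure (Φ π) := bind_isProb π (P π)
  have hfix : Φ π = π := by
    have hb : ∀ n, 1 ≤ n → dTV π (Φ π) ≤ 6 * δ n := by
      intro n hn
      haveI := hps n
      haveI := hps (n + 1)
      have h1 : dTV π (μs (n + 1)) ≤ 2 * δ n := by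
        rw [dTV_comm]
        calc dTV (μs (n + 1)) π ≤ 2 * δ (n + 1) := hdist (n + 1) (by omega)
          _ ≤ 2 * δ n := by have := hδanti n (n + 1) (by omega); linarith
      have h2 : μs (n + 1) = Φ (μs n) := Function.iterate_succ_apply' Φ n (Measure.dirac x0)
      set d : ℝ := dTV (μs n) π with hdd
      have hd0 : 0 ≤ d := dTV_nonneg _ _
      have hd2 : d ≤ 2 := dTV_le_two _ _
      have h3 : dTV (Φ (μs n)) (Φ π) ≤ lam * d * (1 - d / 2) + (1 - α) * d :=
        step_bound P hMarkov α lam hDobr hLip _ _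
      have h4 : lam * d * (1 - d / 2) + (1 - α) * d ≤ 2 * d := by
        nlinarith [mul_nonneg hlam0 (mul_nonneg hd0 hd0),
          mul_nonneg hd0 (by linarith : (0:ℝ) ≤ 1 - lam + α)]
      have h5 : d ≤ 2 * δ n := hdist n hn
      have h6 : dTV (μs (n + 1)) (Φ π) ≤ 4 * δ n := by
        rw [h2]
        linarith
      have htri : dTV π (Φ π) ≤ dTV π (μs (n + 1)) + dTV (μs (n + 1)) (Φ π) :=
        dTV_triangle _ _ _
      linarith
    have htend : Tendsto (fun n => 6 * δ n) atTop (𝓝 (6 * 0)) := hδ0.const_mul 6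
    have hle0 : dTV π (Φ π) ≤ 0 := by
      have hev : ∀ᶠ n in atTop, dTV π (Φ π) ≤ 6 * δ n := by
        filter_upwards [eventually_ge_atTop 1] with n hn using hb n hn
      have := ge_of_tendsto htend hev
      linarith
    exact (eq_of_dTV_nonpos π (Φ π) hle0).symm
  have huniq : ∀ ξ : Measure E, IsProbabilityMeasure ξ → ξ.bind ⇑(P ξ) = ξ → ξ = π := by
    intro ξ hξp hξfix
    haveI := hξp
    have hitξ : ∀ k : ℕ, Φ^[k] ξ = ξ := fun k => Function.iterate_fixed hξfix k
    have hitπ : ∀ k : ℕ, Φ^[k] π = π := fun k => Function.iterate_fixed hfix k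
    have hk : ∀ k : ℕ, dTV ξ π ≤ 2 / (1 + α * ((k:ℝ) + 1)) := by
      intro k
      have hib := iter_bound P hMarkov α lam hDobr hLip hα0 hα1 hlam0 hlamα k ξ π hξp hπprob
      rw [hitξ (k + 1), hitπ (k + 1)] at hib
      exact hib
    have htend : Tendsto (fun k : ℕ => 2 / (1 + α * ((k:ℝ) + 1))) atTop (𝓝 0) := by
      have heq : ∀ k : ℕ, 2 / (1 + α * ((k:ℝ) + 1)) = 2 * δ (k + 1) := fun k => by
        rw [hδdef]; push_cast; ring
      simp only [heq]
      have h2 := (hδ0.comp (tendsto_add_atTop_nat 1)).const_mul 2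
      simpa using h2
    have hle := ge_of_tendsto htend (Eventually.of_forall hk)
    exact eq_of_dTV_nonpos ξ π (by linarith)
  exact ⟨π, ⟨hπprob, hfix⟩, fun ξ hξ => huniq ξ hξ.1 hξ.2⟩
end

section
/- Let (P_μ)_{μ∈𝒫(E)} be a nonlinear Markov transition kernel family on a measurable space (E,ℰ) satisfying the global nonlinear Dobrushin condition with constant α ∈ (0,1] and the measure-Lipschitz condition with constant λ, where 0 ≤ λ < α, and let π be its invariant measure. Then for every initial distribution μ₀ = μ ∈ 𝒫(E), the marginal laws μ_n (defined by μ_{n+1} = P_{μ_n} μ_n) satisfy d_TV(μ_n, π) ≤ 2(1 − (α − λ))^n for all n ∈ ℤ₊. -/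
open MeasureTheory ProbabilityTheory

section aux
variable {E : Type*} [MeasurableSpace E]

lemma bdd_dTV (μ ν : Measure E) [IsProbabilityMeasure μ] [IsProbabilityMeasure ν] :
    BddAbove (Set.range fun A : {A : Set E // MeasurableSet A} =>
      |(μ A.1).toReal - (ν A.1).toReal|) := by
  refine ⟨1, ?_⟩
  rintro x ⟨A, rfl⟩
  have h1 : (μ A.1).toReal ≤ 1 := by
    simpa using ENNReal.toReal_mono ENNReal.one_ne_top (prob_le_one (μ := μ) (s := A.1))
  have h2 : (ν A.1).toReal ≤ 1 := by
    simpa using ENNReal.toReal_mono ENNReal.one_ne_top (prob_le_one (μ := ν) (s := A.1))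
  have h3 : 0 ≤ (μ A.1).toReal := ENNReal.toReal_nonneg
  have h4 : 0 ≤ (ν A.1).toReal := ENNReal.toReal_nonneg
  rw [abs_le]; constructor <;> linarith

lemma abs_le_dTV_half (μ ν : Measure E) [IsProbabilityMeasure μ] [IsProbabilityMeasure ν]
    {A : Set E} (hA : MeasurableSet A) :
    |(μ A).toReal - (ν A).toReal| ≤ dTV μ ν / 2 := by
  have := le_ciSup (bdd_dTV μ ν) (⟨A, hA⟩ : {A : Set E // MeasurableSet A})
  unfold dTV; linarith

lemma dTV_le (μ ν : Measure E) {c : ℝ}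
    (h : ∀ A : Set E, MeasurableSet A → |(μ A).toReal - (ν A).toReal| ≤ c) :
    dTV μ ν ≤ 2 * c := by
  unfold dTV
  have : (⨆ A : {A : Set E // MeasurableSet A}, |(μ A.1).toReal - (ν A.1).toReal|) ≤ c :=
    ciSup_le fun A => h A.1 A.2
  linarith

lemma dTV_nonneg (μ ν : Measure E) [IsProbabilityMeasure μ] [IsProbabilityMeasure ν] :
    0 ≤ dTV μ ν := by
  have := abs_le_dTV_half μ ν MeasurableSet.empty
  have h0 : (0:ℝ) ≤ |(μ ∅).toReal - (ν ∅).toReal| := abs_nonneg _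
  linarith

lemma dTV_comm (μ ν : Measure E) : dTV μ ν = dTV ν μ := by
  unfold dTV
  congr 1
  exact iSup_congr fun A => abs_sub_comm _ _

lemma dTV_triangle (μ ν ρ : Measure E) [IsProbabilityMeasure μ] [IsProbabilityMeasure ν]
    [IsProbabilityMeasure ρ] : dTV μ ρ ≤ dTV μ ν + dTV ν ρ := by
  have h : ∀ A : Set E, MeasurableSet A →
      |(μ A).toReal - (ρ A).toReal| ≤ dTV μ ν / 2 + dTV ν ρ / 2 := by
    intro A hA
    calc |(μ A).toReal - (ρ A).toReal|
        ≤ |(μ A).toReal - (ν A).toReal| + |(ν A).toReal - (ρ A).toReal| := abs_sub_le _ _ _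
      _ ≤ dTV μ ν / 2 + dTV ν ρ / 2 :=
          add_le_add (abs_le_dTV_half μ ν hA) (abs_le_dTV_half ν ρ hA)
  have := dTV_le μ ρ h
  linarith

lemma integrable_of_bdd {μ : Measure E} [IsFiniteMeasure μ] {f : E → ℝ} (hf : Measurable f)
    (hb : ∀ x, |f x| ≤ 1) : Integrable f μ := by
  refine (integrable_const (1:ℝ)).mono' hf.aestronglyMeasurable ?_
  filter_upwards with x
  simpa using hb x

/-- Key Dobrushin-type bound via Hahn decomposition. -/
lemma integral_sub_le (μ ν : Measure E) [IsProbabilityMeasure μ] [IsProbabilityMeasure ν]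
    {f : E → ℝ} (hf : Measurable f) (h0 : ∀ x, 0 ≤ f x) (h1 : ∀ x, f x ≤ 1)
    {c : ℝ} (hc : 0 ≤ c) (hosc : ∀ x y, |f x - f y| ≤ c) :
    ∫ x, f x ∂μ - ∫ x, f x ∂ν ≤ c * (dTV μ ν / 2) := by
  have hE : Nonempty E := by
    by_contra h
    rw [not_nonempty_iff] at h
    have h1 : μ Set.univ = 1 := measure_univ
    rw [Set.univ_eq_empty_iff.2 h, measure_empty] at h1
    exact zero_ne_one h1
  -- shift f by its infimum
  set m : ℝ := sInf (Set.range f) with hm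
  have hbdd : BddBelow (Set.range f) := ⟨0, by rintro x ⟨y, rfl⟩; exact h0 y⟩
  have hmle : ∀ x, m ≤ f x := fun x => csInf_le hbdd ⟨x, rfl⟩
  have hmge : ∀ x, f x - m ≤ c := by
    intro x
    have : f x - c ≤ m := by
      apply le_csInf (Set.range_nonempty f)
      rintro y ⟨z, rfl⟩
      have := hosc x z
      rw [abs_le] at this
      linarith [this.1]
    linarith
  set g : E → ℝ := fun x => f x - m with hg
  have hgm : Measurable g := hf.sub measurable_const
  have hg0 : ∀ x, 0 ≤ g x := fun x => by simp [hg]; linarith [hmle x]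
  have hgc : ∀ x, g x ≤ c := fun x => hmge x
  have hm0 : 0 ≤ m := le_csInf (Set.range_nonempty f) (by rintro y ⟨z, rfl⟩; exact h0 z)
  have hgb : ∀ x, |g x| ≤ 1 := by
    intro x
    rw [abs_le]
    constructor
    · linarith [hg0 x]
    · simp only [hg]; linarith [h1 x, hm0]
  have hInt : ∀ (ρ : Measure E), IsFiniteMeasure ρ → Integrable g ρ := by
    intro ρ hρ
    exact integrable_of_bdd hgm hgb
  -- reduce to g
  have hred : ∫ x, f x ∂μ - ∫ x, f x ∂ν = ∫ x, g x ∂μ - ∫ x, g x ∂ν := by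
    have hfi : Integrable f μ := integrable_of_bdd hf (fun x => abs_le.2 ⟨by linarith [h0 x], h1 x⟩)
    have hfi' : Integrable f ν := integrable_of_bdd hf (fun x => abs_le.2 ⟨by linarith [h0 x], h1 x⟩)
    rw [show g = fun x => f x - m from rfl]
    rw [integral_sub hfi (integrable_const m), integral_sub hfi' (integrable_const m)]
    simp [measure_univ]
  rw [hred]
  -- Hahn decomposition
  obtain ⟨s, hs, hss, hsc⟩ := hahn_decomposition (μ := μ) (ν := ν)
  have hles : ν.restrict s ≤ μ.restrict s := by
    rw [Measure.le_iff]
    intro t ht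
    rw [Measure.restrict_apply ht, Measure.restrict_apply ht]
    exact hss _ (ht.inter hs) Set.inter_subset_right
  have hlesc : μ.restrict sᶜ ≤ ν.restrict sᶜ := by
    rw [Measure.le_iff]
    intro t ht
    rw [Measure.restrict_apply ht, Measure.restrict_apply ht]
    exact hsc _ (ht.inter hs.compl) Set.inter_subset_right
  set ρ : Measure E := μ.restrict s - ν.restrict s with hρdef
  set ρ' : Measure E := ν.restrict sᶜ - μ.restrict sᶜ with hρ'def
  have hρ : ρ + ν.restrict s = μ.restrict s := Measure.sub_add_cancel_of_le hles
  have hρ' : ρ' + μ.restrict sᶜ = ν.restrict sᶜ := Measure.sub_add_cancel_of_le hlesc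
  haveI : IsFiniteMeasure ρ := isFiniteMeasure_of_le (μ.restrict s) Measure.sub_le
  haveI : IsFiniteMeasure ρ' := isFiniteMeasure_of_le (ν.restrict sᶜ) Measure.sub_le
  have hμdec : ∫ x, g x ∂μ = ∫ x, g x ∂ρ + ∫ x, g x ∂(ν.restrict s) + ∫ x, g x ∂(μ.restrict sᶜ) := by
    rw [← integral_add_compl hs (hInt μ inferInstance)]
    congr 1
    rw [show ∫ x in s, g x ∂μ = ∫ x, g x ∂(μ.restrict s) from rfl, ← hρ,
      integral_add_measure (hInt ρ inferInstance) (hInt _ inferInstance)]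
  have hνdec : ∫ x, g x ∂ν = ∫ x, g x ∂(ν.restrict s) + (∫ x, g x ∂ρ' + ∫ x, g x ∂(μ.restrict sᶜ)) := by
    rw [← integral_add_compl hs (hInt ν inferInstance)]
    congr 1
    rw [show ∫ x in sᶜ, g x ∂ν = ∫ x, g x ∂(ν.restrict sᶜ) from rfl, ← hρ',
      integral_add_measure (hInt ρ' inferInstance) (hInt _ inferInstance)]
  have hkey : ∫ x, g x ∂μ - ∫ x, g x ∂ν = ∫ x, g x ∂ρ - ∫ x, g x ∂ρ' := by
    rw [hμdec, hνdec]; ring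
  rw [hkey]
  have h2 : ∫ x, g x ∂ρ' ≥ 0 := integral_nonneg hg0
  have h3 : ∫ x, g x ∂ρ ≤ c * (ρ Set.univ).toReal := by
    calc ∫ x, g x ∂ρ ≤ ∫ _x, c ∂ρ := integral_mono (hInt ρ inferInstance) (integrable_const c) hgc
      _ = c * (ρ Set.univ).toReal := by simp [mul_comm, Measure.real]
  have h4 : (ρ Set.univ).toReal = (μ s).toReal - (ν s).toReal := by
    have := congrArg (fun m : Measure E => m Set.univ) hρ
    simp only [Measure.add_apply, Measure.restrict_apply_univ] at this
    have hfin1 : ρ Set.univ ≠ ⊤ := measure_ne_top ρ _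
    have hfin2 : ν s ≠ ⊤ := measure_ne_top ν _
    have := congrArg ENNReal.toReal this
    rw [ENNReal.toReal_add hfin1 hfin2] at this
    linarith
  have h5 : (μ s).toReal - (ν s).toReal ≤ dTV μ ν / 2 :=
    (le_abs_self _).trans (abs_le_dTV_half μ ν hs)
  have h6 : c * (ρ Set.univ).toReal ≤ c * (dTV μ ν / 2) := by
    rw [h4]; exact mul_le_mul_of_nonneg_left h5 hc
  linarith

lemma bind_apply_toReal (μ : Measure E) [IsProbabilityMeasure μ] (k : Kernel E E)
    [IsMarkovKernel k] {A : Set E} (hA : MeasurableSet A) :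
    ((μ.bind ⇑k) A).toReal = ∫ x, (k x A).toReal ∂μ := by
  rw [Measure.bind_apply hA k.measurable.aemeasurable]
  rw [integral_toReal ((k.measurable_coe hA).aemeasurable)]
  filter_upwards with x
  exact measure_lt_top _ _

lemma isProbabilityMeasure_bind (μ : Measure E) [IsProbabilityMeasure μ] (k : Kernel E E)
    [IsMarkovKernel k] : IsProbabilityMeasure (μ.bind ⇑k) := by
  constructor
  rw [Measure.bind_apply MeasurableSet.univ k.measurable.aemeasurable]
  simp [measure_univ]

end aux

/-- Under the global nonlinear Dobrushin condition with constant `α ∈ (0,1]` and the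
measure-Lipschitz condition with constant `lam`, `0 ≤ lam < α`, the marginal laws
`μ_{n+1} = P_{μ_n} μ_n` converge to the invariant measure `π` at rate
`d_TV(μ_n, π) ≤ 2 (1 − (α − lam))^n`. -/
theorem stmt1 {E : Type*} [MeasurableSpace E]
    (P : Measure E → Kernel E E) (hMarkov : ∀ μ, IsMarkovKernel (P μ))
    (α lam : ℝ) (hα0 : 0 < α) (hα1 : α ≤ 1) (hlam0 : 0 ≤ lam) (hlamα : lam < α)
    (hDobr : ∀ μ ν : Measure E, IsProbabilityMeasure μ → IsProbabilityMeasure ν →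
      ∀ x y : E, dTV ((P μ) x) ((P ν) y) ≤ 2 * (1 - α))
    (hLip : ∀ μ ν : Measure E, IsProbabilityMeasure μ → IsProbabilityMeasure ν →
      ∀ x : E, dTV ((P μ) x) ((P ν) x) ≤ lam * dTV μ ν)
    (π : Measure E) (hπ : IsProbabilityMeasure π) (hπinv : π.bind ⇑(P π) = π)
    (μ : Measure E) (hμ : IsProbabilityMeasure μ)
    (seq : ℕ → Measure E) (hseq0 : seq 0 = μ)
    (hseqS : ∀ n : ℕ, seq (n + 1) = (seq n).bind ⇑(P (seq n))) :
    ∀ n : ℕ, dTV (seq n) π ≤ 2 * (1 - (α - lam)) ^ n := by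
  haveI := hπ
  haveI := hμ
  haveI := fun ν => hMarkov ν
  have hprob : ∀ n, IsProbabilityMeasure (seq n) := by
    intro n
    induction n with
    | zero => rw [hseq0]; exact hμ
    | succ n ih =>
      rw [hseqS n]
      haveI := ih
      exact isProbabilityMeasure_bind (seq n) (P (seq n))
  have hβ0 : (0:ℝ) ≤ 1 - (α - lam) := by linarith
  intro n
  induction n with
  | zero =>
    simp only [pow_zero, mul_one]
    haveI := hprob 0
    have := dTV_le (seq 0) π (c := 1) (fun A hA => by
      have h1 : ((seq 0) A).toReal ≤ 1 := by
        simpa using ENNReal.toReal_mono ENNReal.one_ne_top (prob_le_one (μ := seq 0) (s := A))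
      have h2 : (π A).toReal ≤ 1 := by
        simpa using ENNReal.toReal_mono ENNReal.one_ne_top (prob_le_one (μ := π) (s := A))
      have h3 : 0 ≤ (π A).toReal := ENNReal.toReal_nonneg
      have h4 : 0 ≤ ((seq 0) A).toReal := ENNReal.toReal_nonneg
      rw [abs_le]
      exact ⟨by linarith, by linarith⟩)
    linarith
  | succ n ih =>
    haveI := hprob n
    haveI := hprob (n+1)
    set ν := seq n with hν
    -- d(n+1) ≤ (1-(α-lam)) d(n)
    have hstep : dTV (seq (n+1)) π ≤ (1 - (α - lam)) * dTV ν π := by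
      rw [hseqS n]
      conv_lhs => rw [← hπinv]
      have hbound : ∀ A : Set E, MeasurableSet A →
          |((ν.bind ⇑(P ν)) A).toReal - ((π.bind ⇑(P π)) A).toReal| ≤
            (lam * dTV ν π + (1 - α) * dTV ν π) / 2 := by
        intro A hA
        set f1 : E → ℝ := fun x => ((P ν) x A).toReal with hf1
        set f2 : E → ℝ := fun x => ((P π) x A).toReal with hf2
        have hmf1 : Measurable f1 := ((P ν).measurable_coe hA).ennreal_toReal
        have hmf2 : Measurable f2 := ((P π).measurable_coe hA).ennreal_toReal
        have hb1 : ∀ x, 0 ≤ f2 x := fun x => ENNReal.toReal_nonneg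
        have hb2 : ∀ x, f2 x ≤ 1 := fun x => by
          simpa [hf2] using ENNReal.toReal_mono ENNReal.one_ne_top (prob_le_one (μ := (P π) x) (s := A))
        have e1 : ((ν.bind ⇑(P ν)) A).toReal = ∫ x, f1 x ∂ν := bind_apply_toReal ν (P ν) hA
        have e2 : ((π.bind ⇑(P π)) A).toReal = ∫ x, f2 x ∂π := bind_apply_toReal π (P π) hA
        have e3 : ((ν.bind ⇑(P π)) A).toReal = ∫ x, f2 x ∂ν := bind_apply_toReal ν (P π) hA
        rw [e1, e2]
        have tri : |∫ x, f1 x ∂ν - ∫ x, f2 x ∂π| ≤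
            |∫ x, f1 x ∂ν - ∫ x, f2 x ∂ν| + |∫ x, f2 x ∂ν - ∫ x, f2 x ∂π| := abs_sub_le _ _ _
        -- first term: Lipschitz
        have hterm1 : |∫ x, f1 x ∂ν - ∫ x, f2 x ∂ν| ≤ lam * dTV ν π / 2 := by
          have hptw : ∀ x, |f1 x - f2 x| ≤ lam * dTV ν π / 2 := by
            intro x
            have h := abs_le_dTV_half ((P ν) x) ((P π) x) hA
            have h2 := hLip ν π (hprob n) hπ x
            calc |f1 x - f2 x| ≤ dTV ((P ν) x) ((P π) x) / 2 := h
              _ ≤ lam * dTV ν π / 2 := by linarith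
          have hint1 : Integrable f1 ν := integrable_of_bdd hmf1 (fun x => by
            rw [abs_le]
            refine ⟨by linarith [ENNReal.toReal_nonneg (a := (P ν) x A)], ?_⟩
            simpa [hf1] using ENNReal.toReal_mono ENNReal.one_ne_top (prob_le_one (μ := (P ν) x) (s := A)))
          have hint2 : Integrable f2 ν := integrable_of_bdd hmf2 (fun x =>
            abs_le.2 ⟨by linarith [hb1 x], hb2 x⟩)
          calc |∫ x, f1 x ∂ν - ∫ x, f2 x ∂ν| = |∫ x, (f1 x - f2 x) ∂ν| := by
                rw [integral_sub hint1 hint2]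
            _ ≤ ∫ x, |f1 x - f2 x| ∂ν := by
                simpa [Real.norm_eq_abs] using
                  norm_integral_le_integral_norm (μ := ν) (fun x => f1 x - f2 x)
            _ ≤ ∫ _x, lam * dTV ν π / 2 ∂ν := integral_mono ((hint1.sub hint2).abs)
                (integrable_const _) hptw
            _ = lam * dTV ν π / 2 := by simp [measure_univ]
        -- second term: Dobrushin
        have hosc : ∀ x y, |f2 x - f2 y| ≤ 1 - α := by
          intro x y
          have h := abs_le_dTV_half ((P π) x) ((P π) y) hA
          have h2 := hDobr π π hπ hπ x y
          calc |f2 x - f2 y| ≤ dTV ((P π) x) ((P π) y) / 2 := h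
            _ ≤ 1 - α := by linarith
        have h1α : (0:ℝ) ≤ 1 - α := by linarith
        have hterm2 : |∫ x, f2 x ∂ν - ∫ x, f2 x ∂π| ≤ (1 - α) * (dTV ν π / 2) := by
          rw [abs_le]
          constructor
          · have := integral_sub_le π ν hmf2 hb1 hb2 h1α hosc
            rw [dTV_comm π ν] at this
            linarith
          · exact integral_sub_le ν π hmf2 hb1 hb2 h1α hosc
        calc |∫ x, f1 x ∂ν - ∫ x, f2 x ∂π| ≤
            |∫ x, f1 x ∂ν - ∫ x, f2 x ∂ν| + |∫ x, f2 x ∂ν - ∫ x, f2 x ∂π| := tri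
          _ ≤ lam * dTV ν π / 2 + (1 - α) * (dTV ν π / 2) := add_le_add hterm1 hterm2
          _ = (lam * dTV ν π + (1 - α) * dTV ν π) / 2 := by ring
      have := dTV_le (ν.bind ⇑(P ν)) (π.bind ⇑(P π)) hbound
      calc dTV (ν.bind ⇑(P ν)) (π.bind ⇑(P π)) ≤
          2 * ((lam * dTV ν π + (1 - α) * dTV ν π) / 2) := this
        _ = (1 - (α - lam)) * dTV ν π := by ring
    calc dTV (seq (n+1)) π ≤ (1 - (α - lam)) * dTV ν π := hstep
      _ ≤ (1 - (α - lam)) * (2 * (1 - (α - lam)) ^ n) := mul_le_mul_of_nonneg_left ih hβ0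
      _ = 2 * (1 - (α - lam)) ^ (n+1) := by ring
end

section
/- Let (P_μ)_{μ∈𝒫(E)} be a nonlinear Markov transition kernel family on a measurable space (E,ℰ) satisfying the global nonlinear Dobrushin condition with constant α ∈ (0,1] and the measure-Lipschitz condition with constant λ = α. Then for all μ, ν ∈ 𝒫(E) and all positive integers n, the n-th marginal laws satisfy d_TV(μ_n, ν_n) ≤ 2/(λ n), where μ_0 = μ, ν_0 = ν, μ_{k+1} = P_{μ_k} μ_k and ν_{k+1} = P_{ν_k} ν_k. -/
open MeasureTheory ProbabilityTheory

namespace DTVaux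

variable {E : Type*} [MeasurableSpace E]

lemma bdd (μ ν : Measure E) [IsFiniteMeasure μ] [IsFiniteMeasure ν] :
    BddAbove (Set.range fun A : {A : Set E // MeasurableSet A} =>
      |(μ A.1).toReal - (ν A.1).toReal|) := by
  refine ⟨(μ Set.univ).toReal + (ν Set.univ).toReal, ?_⟩
  rintro x ⟨A, rfl⟩
  have h1 : (μ A.1).toReal ≤ (μ Set.univ).toReal :=
    ENNReal.toReal_mono (measure_ne_top _ _) (measure_mono (Set.subset_univ _))
  have h2 : (ν A.1).toReal ≤ (ν Set.univ).toReal :=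
    ENNReal.toReal_mono (measure_ne_top _ _) (measure_mono (Set.subset_univ _))
  have h3 : (0:ℝ) ≤ (μ A.1).toReal := ENNReal.toReal_nonneg
  have h4 : (0:ℝ) ≤ (ν A.1).toReal := ENNReal.toReal_nonneg
  rw [abs_le]; constructor <;> nlinarith

lemma abs_le_half (μ ν : Measure E) [IsFiniteMeasure μ] [IsFiniteMeasure ν]
    {A : Set E} (hA : MeasurableSet A) :
    |(μ A).toReal - (ν A).toReal| ≤ dTV μ ν / 2 := by
  have := le_ciSup (bdd μ ν) (⟨A, hA⟩ : {A : Set E // MeasurableSet A})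
  rw [dTV]; linarith

lemma nonneg (μ ν : Measure E) [IsFiniteMeasure μ] [IsFiniteMeasure ν] :
    0 ≤ dTV μ ν := by
  have := abs_le_half μ ν MeasurableSet.empty
  have h := abs_nonneg ((μ ∅).toReal - (ν ∅).toReal)
  linarith

lemma dTV_le (μ ν : Measure E) {K : ℝ}
    (h : ∀ A : Set E, MeasurableSet A → |(μ A).toReal - (ν A).toReal| ≤ K) :
    dTV μ ν ≤ 2 * K := by
  rw [dTV]
  have : (⨆ A : {A : Set E // MeasurableSet A}, |(μ A.1).toReal - (ν A.1).toReal|) ≤ K :=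
    ciSup_le fun A => h A.1 A.2
  linarith

lemma comm (μ ν : Measure E) : dTV μ ν = dTV ν μ := by
  rw [dTV, dTV]
  congr 1
  exact iSup_congr fun A => abs_sub_comm _ _

lemma le_two (μ ν : Measure E) [IsProbabilityMeasure μ] [IsProbabilityMeasure ν] :
    dTV μ ν ≤ 2 := by
  have := dTV_le μ ν (K := 1) ?_
  · linarith
  · intro A hA
    have h1 : (μ A).toReal ≤ 1 := by
      simpa using ENNReal.toReal_mono (by simp) (prob_le_one (μ := μ) (s := A))
    have h2 : (ν A).toReal ≤ 1 := by
      simpa using ENNReal.toReal_mono (by simp) (prob_le_one (μ := ν) (s := A))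
    rw [abs_le]
    constructor <;> nlinarith [ENNReal.toReal_nonneg (a := μ A), ENNReal.toReal_nonneg (a := ν A)]

lemma one_sided {μ ν : Measure E} [IsProbabilityMeasure μ] [IsProbabilityMeasure ν]
    (κ η : Kernel E E)
    {S : Set E} (hS : MeasurableSet S)
    (hle1 : ν.restrict S ≤ μ.restrict S) (hle2 : μ.restrict Sᶜ ≤ ν.restrict Sᶜ)
    {A : Set E} (hA : MeasurableSet A)
    (c1 c2 : ENNReal)
    (hpt1 : ∀ x y, κ x A ≤ η y A + c1)
    (hpt2 : ∀ x, κ x A ≤ η x A + c2)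
    (hστ : (μ.restrict S - ν.restrict S) Set.univ
         = (ν.restrict Sᶜ - μ.restrict Sᶜ) Set.univ) :
    (μ.bind ⇑κ) A ≤ (ν.bind ⇑η) A
      + c1 * (μ.restrict S - ν.restrict S) Set.univ + c2 * (ν S + μ Sᶜ) := by
  set σ := μ.restrict S - ν.restrict S with hσ
  set τ := ν.restrict Sᶜ - μ.restrict Sᶜ with hτ
  have hμdec : μ = σ + ν.restrict S + μ.restrict Sᶜ := by
    rw [hσ, Measure.sub_add_cancel_of_le hle1, Measure.restrict_add_restrict_compl hS]
  have hνdec : ν = τ + μ.restrict Sᶜ + ν.restrict S := by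
    rw [hτ, Measure.sub_add_cancel_of_le hle2]
    rw [add_comm, Measure.restrict_add_restrict_compl hS]
  have hbμ : (μ.bind ⇑κ) A = ∫⁻ x, κ x A ∂μ := Measure.bind_apply hA (Kernel.measurable κ).aemeasurable
  have hbν : (ν.bind ⇑η) A = ∫⁻ x, η x A ∂ν := Measure.bind_apply hA (Kernel.measurable η).aemeasurable
  have hmκ : Measurable fun x => κ x A := Kernel.measurable_coe κ hA
  have hmη : Measurable fun x => η x A := Kernel.measurable_coe η hA
  have hμsplit : ∫⁻ x, κ x A ∂μ
      = ∫⁻ x, κ x A ∂σ + ∫⁻ x, κ x A ∂(ν.restrict S) + ∫⁻ x, κ x A ∂(μ.restrict Sᶜ) := by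
    conv_lhs => rw [hμdec]
    rw [lintegral_add_measure, lintegral_add_measure]
  have hνsplit : ∫⁻ x, η x A ∂ν
      = ∫⁻ x, η x A ∂τ + ∫⁻ x, η x A ∂(μ.restrict Sᶜ) + ∫⁻ x, η x A ∂(ν.restrict S) := by
    conv_lhs => rw [hνdec]
    rw [lintegral_add_measure, lintegral_add_measure]
  -- diagonal parts
  have hT2 : ∫⁻ x, κ x A ∂(ν.restrict S)
      ≤ ∫⁻ x, η x A ∂(ν.restrict S) + c2 * ν S := by
    calc ∫⁻ x, κ x A ∂(ν.restrict S) ≤ ∫⁻ x, (η x A + c2) ∂(ν.restrict S) :=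
          lintegral_mono fun x => hpt2 x
      _ = ∫⁻ x, η x A ∂(ν.restrict S) + c2 * ν S := by
          rw [lintegral_add_right _ measurable_const, lintegral_const,
            Measure.restrict_apply_univ]
  have hT3 : ∫⁻ x, κ x A ∂(μ.restrict Sᶜ)
      ≤ ∫⁻ x, η x A ∂(μ.restrict Sᶜ) + c2 * μ Sᶜ := by
    calc ∫⁻ x, κ x A ∂(μ.restrict Sᶜ) ≤ ∫⁻ x, (η x A + c2) ∂(μ.restrict Sᶜ) :=
          lintegral_mono fun x => hpt2 x
      _ = _ := by
          rw [lintegral_add_right _ measurable_const, lintegral_const,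
            Measure.restrict_apply_univ]
  -- off-diagonal parts
  have hT1 : ∫⁻ x, κ x A ∂σ ≤ ∫⁻ y, η y A ∂τ + c1 * σ Set.univ := by
    by_cases hs0 : σ Set.univ = 0
    · have : σ = 0 := Measure.measure_univ_eq_zero.mp hs0
      rw [this, lintegral_zero_measure]
      exact zero_le
    · have hsle : σ Set.univ ≤ μ.restrict S Set.univ := Measure.le_iff'.mp MeasureTheory.Measure.sub_le Set.univ
      have hstop : σ Set.univ ≠ ⊤ := by
        refine ne_top_of_le_ne_top ?_ hsle
        rw [Measure.restrict_apply_univ]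
        exact measure_ne_top μ S
      have key : (∫⁻ x, κ x A ∂σ) * σ Set.univ
          ≤ (∫⁻ y, η y A ∂τ + c1 * σ Set.univ) * σ Set.univ := by
        calc (∫⁻ x, κ x A ∂σ) * σ Set.univ
            = ∫⁻ x, κ x A * τ Set.univ ∂σ := by
              rw [lintegral_mul_const _ hmκ, hστ]
          _ = ∫⁻ x, ∫⁻ y, κ x A ∂τ ∂σ := by
              simp [lintegral_const]
          _ ≤ ∫⁻ x, ∫⁻ y, (η y A + c1) ∂τ ∂σ := by
              exact lintegral_mono fun x => lintegral_mono fun y => hpt1 x y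
          _ = ∫⁻ x, (∫⁻ y, η y A ∂τ + c1 * τ Set.univ) ∂σ := by
              congr 1; funext x
              rw [lintegral_add_right _ measurable_const, lintegral_const]
          _ = (∫⁻ y, η y A ∂τ + c1 * σ Set.univ) * σ Set.univ := by
              rw [lintegral_const, hστ]
      exact (ENNReal.mul_le_mul_iff_left hs0 hstop).mp key
  rw [hbμ, hbν, hμsplit, hνsplit]
  calc ∫⁻ x, κ x A ∂σ + ∫⁻ x, κ x A ∂(ν.restrict S) + ∫⁻ x, κ x A ∂(μ.restrict Sᶜ)
      ≤ (∫⁻ y, η y A ∂τ + c1 * σ Set.univ)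
        + (∫⁻ x, η x A ∂(ν.restrict S) + c2 * ν S)
        + (∫⁻ x, η x A ∂(μ.restrict Sᶜ) + c2 * μ Sᶜ) :=
        add_le_add (add_le_add hT1 hT2) hT3
    _ = ∫⁻ x, η x A ∂τ + ∫⁻ x, η x A ∂(μ.restrict Sᶜ) + ∫⁻ x, η x A ∂(ν.restrict S)
        + c1 * σ Set.univ + c2 * (ν S + μ Sᶜ) := by ring

lemma toReal_split (ρ : Measure E) [IsFiniteMeasure ρ] {X Y : Set E} (hY : MeasurableSet Y) :
    (ρ (X ∩ Y)).toReal + (ρ (X \ Y)).toReal = (ρ X).toReal := by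
  rw [← ENNReal.toReal_add (measure_ne_top _ _) (measure_ne_top _ _),
    measure_inter_add_diff X hY]

section hahn
variable {μ ν : Measure E} [IsProbabilityMeasure μ] [IsProbabilityMeasure ν]
  {S : Set E} (hS : MeasurableSet S)
  (hS1 : ∀ t, MeasurableSet t → t ⊆ S → ν t ≤ μ t)
  (hS2 : ∀ t, MeasurableSet t → t ⊆ Sᶜ → μ t ≤ ν t)

include hS hS1 hS2

lemma hahn_facts :
    dTV μ ν = 2 * ((μ S).toReal - (ν S).toReal)
    ∧ (ν S).toReal ≤ (μ S).toReal
    ∧ (μ S).toReal - (ν S).toReal = (ν Sᶜ).toReal - (μ Sᶜ).toReal := by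
  have hνμS : ν S ≤ μ S := hS1 S hS subset_rfl
  have hμνSc : μ Sᶜ ≤ ν Sᶜ := hS2 Sᶜ hS.compl subset_rfl
  have h1 : (μ S).toReal + (μ Sᶜ).toReal = 1 := by
    rw [← ENNReal.toReal_add (measure_ne_top _ _) (measure_ne_top _ _),
      measure_add_measure_compl hS, measure_univ, ENNReal.toReal_one]
  have h2 : (ν S).toReal + (ν Sᶜ).toReal = 1 := by
    rw [← ENNReal.toReal_add (measure_ne_top _ _) (measure_ne_top _ _),
      measure_add_measure_compl hS, measure_univ, ENNReal.toReal_one]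
  have hle : (ν S).toReal ≤ (μ S).toReal :=
    ENNReal.toReal_mono (measure_ne_top _ _) hνμS
  have hlec : (μ Sᶜ).toReal ≤ (ν Sᶜ).toReal :=
    ENNReal.toReal_mono (measure_ne_top _ _) hμνSc
  refine ⟨?_, hle, by linarith⟩
  have hub : ∀ A : Set E, MeasurableSet A →
      |(μ A).toReal - (ν A).toReal| ≤ (μ S).toReal - (ν S).toReal := by
    intro A hA
    have eμA : (μ (A ∩ S)).toReal + (μ (A \ S)).toReal = (μ A).toReal := toReal_split μ hS
    have eνA : (ν (A ∩ S)).toReal + (ν (A \ S)).toReal = (ν A).toReal := toReal_split ν hS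
    have eμS : (μ (S ∩ A)).toReal + (μ (S \ A)).toReal = (μ S).toReal := toReal_split μ hA
    have eνS : (ν (S ∩ A)).toReal + (ν (S \ A)).toReal = (ν S).toReal := toReal_split ν hA
    have eμSc : (μ (Sᶜ ∩ A)).toReal + (μ (Sᶜ \ A)).toReal = (μ Sᶜ).toReal := toReal_split μ hA
    have eνSc : (ν (Sᶜ ∩ A)).toReal + (ν (Sᶜ \ A)).toReal = (ν Sᶜ).toReal := toReal_split ν hA
    have cAS : A ∩ S = S ∩ A := Set.inter_comm _ _
    have cASc : A \ S = Sᶜ ∩ A := by rw [Set.diff_eq, Set.inter_comm]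
    rw [cAS, cASc] at eμA eνA
    have i1 : (ν (S ∩ A)).toReal ≤ (μ (S ∩ A)).toReal :=
      ENNReal.toReal_mono (measure_ne_top _ _)
        (hS1 _ (hS.inter hA) Set.inter_subset_left)
    have i2 : (ν (S \ A)).toReal ≤ (μ (S \ A)).toReal :=
      ENNReal.toReal_mono (measure_ne_top _ _)
        (hS1 _ (hS.diff hA) Set.diff_subset)
    have i3 : (μ (Sᶜ ∩ A)).toReal ≤ (ν (Sᶜ ∩ A)).toReal :=
      ENNReal.toReal_mono (measure_ne_top _ _)
        (hS2 _ (hS.compl.inter hA) Set.inter_subset_left)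
    have i4 : (μ (Sᶜ \ A)).toReal ≤ (ν (Sᶜ \ A)).toReal :=
      ENNReal.toReal_mono (measure_ne_top _ _)
        (hS2 _ (hS.compl.diff hA) Set.diff_subset)
    rw [abs_le]
    constructor <;> linarith
  have hlb : (μ S).toReal - (ν S).toReal ≤ |(μ S).toReal - (ν S).toReal| := le_abs_self _
  have := abs_le_half μ ν hS
  have := dTV_le μ ν hub
  linarith

end hahn

lemma bind_prob (μ : Measure E) [IsProbabilityMeasure μ] (κ : Kernel E E)
    [IsMarkovKernel κ] : IsProbabilityMeasure (μ.bind ⇑κ) := by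
  constructor
  rw [Measure.bind_apply MeasurableSet.univ (Kernel.measurable κ).aemeasurable]
  simp

lemma ennreal_pt {p q : Measure E} [IsProbabilityMeasure p] [IsProbabilityMeasure q]
    {A : Set E} (hA : MeasurableSet A) {c : ℝ} (hc : 0 ≤ c) (h : dTV p q ≤ c) :
    p A ≤ q A + ENNReal.ofReal (c / 2) := by
  have h1 : (p A).toReal ≤ (q A).toReal + c / 2 := by
    have := abs_le_half p q hA
    have := le_abs_self ((p A).toReal - (q A).toReal)
    linarith
  calc p A = ENNReal.ofReal ((p A).toReal) := (ENNReal.ofReal_toReal (measure_ne_top _ _)).symm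
    _ ≤ ENNReal.ofReal ((q A).toReal + c / 2) := ENNReal.ofReal_le_ofReal h1
    _ = ENNReal.ofReal ((q A).toReal) + ENNReal.ofReal (c / 2) :=
        ENNReal.ofReal_add ENNReal.toReal_nonneg (by linarith)
    _ = q A + ENNReal.ofReal (c / 2) := by
        rw [ENNReal.ofReal_toReal (measure_ne_top _ _)]

lemma step (P : Measure E → Kernel E E) (hMarkov : ∀ μ, IsMarkovKernel (P μ))
    (α lam : ℝ) (hα0 : 0 < α) (hα1 : α ≤ 1) (hlamα : lam = α)
    (hDobr : ∀ μ ν : Measure E, IsProbabilityMeasure μ → IsProbabilityMeasure ν →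
      ∀ x y : E, dTV ((P μ) x) ((P ν) y) ≤ 2 * (1 - α))
    (hLip : ∀ μ ν : Measure E, IsProbabilityMeasure μ → IsProbabilityMeasure ν →
      ∀ x : E, dTV ((P μ) x) ((P ν) x) ≤ lam * dTV μ ν)
    (μ ν : Measure E) [hμ : IsProbabilityMeasure μ] [hν : IsProbabilityMeasure ν] :
    dTV (μ.bind ⇑(P μ)) (ν.bind ⇑(P ν)) ≤ dTV μ ν - lam * (dTV μ ν) ^ 2 / 2 := by
  subst hlamα
  obtain ⟨S, hS, hS1, hS2⟩ := hahn_decomposition (μ := μ) (ν := ν)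
  set d := dTV μ ν with hd
  obtain ⟨hdeq, hbale, hcompl⟩ := hahn_facts hS hS1 hS2
  have hd0 : 0 ≤ d := nonneg μ ν
  have hd2 : d ≤ 2 := le_two μ ν
  have hhalf : (μ S).toReal - (ν S).toReal = d / 2 := by rw [hd, hdeq]; ring
  have hhalfc : (ν Sᶜ).toReal - (μ Sᶜ).toReal = d / 2 := by rw [← hcompl]; exact hhalf
  haveI := hMarkov μ; haveI := hMarkov ν
  set κ := P μ with hκ
  set η := P ν with hη
  have hle1 : ν.restrict S ≤ μ.restrict S := by
    refine Measure.le_iff.mpr fun t ht => ?_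
    rw [Measure.restrict_apply ht, Measure.restrict_apply ht]
    exact hS1 _ (ht.inter hS) Set.inter_subset_right
  have hle2 : μ.restrict Sᶜ ≤ ν.restrict Sᶜ := by
    refine Measure.le_iff.mpr fun t ht => ?_
    rw [Measure.restrict_apply ht, Measure.restrict_apply ht]
    exact hS2 _ (ht.inter hS.compl) Set.inter_subset_right
  have hσval : (μ.restrict S - ν.restrict S) Set.univ = ENNReal.ofReal (d / 2) := by
    rw [Measure.sub_apply MeasurableSet.univ hle1, Measure.restrict_apply_univ,
      Measure.restrict_apply_univ]
    rw [show μ S = ENNReal.ofReal ((μ S).toReal) from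
        (ENNReal.ofReal_toReal (measure_ne_top _ _)).symm,
      show ν S = ENNReal.ofReal ((ν S).toReal) from
        (ENNReal.ofReal_toReal (measure_ne_top _ _)).symm,
      ← ENNReal.ofReal_sub _ ENNReal.toReal_nonneg, hhalf]
  have hτval : (ν.restrict Sᶜ - μ.restrict Sᶜ) Set.univ = ENNReal.ofReal (d / 2) := by
    have hle2' : μ.restrict Sᶜ ≤ ν.restrict Sᶜ := hle2
    rw [Measure.sub_apply MeasurableSet.univ hle2', Measure.restrict_apply_univ,
      Measure.restrict_apply_univ]
    rw [show ν Sᶜ = ENNReal.ofReal ((ν Sᶜ).toReal) from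
        (ENNReal.ofReal_toReal (measure_ne_top _ _)).symm,
      show μ Sᶜ = ENNReal.ofReal ((μ Sᶜ).toReal) from
        (ENNReal.ofReal_toReal (measure_ne_top _ _)).symm,
      ← ENNReal.ofReal_sub _ ENNReal.toReal_nonneg, hhalfc]
  have hστ : (μ.restrict S - ν.restrict S) Set.univ
      = (ν.restrict Sᶜ - μ.restrict Sᶜ) Set.univ := by rw [hσval, hτval]
  have hμ1 : (μ S).toReal + (μ Sᶜ).toReal = 1 := by
    rw [← ENNReal.toReal_add (measure_ne_top _ _) (measure_ne_top _ _),
      measure_add_measure_compl hS, measure_univ, ENNReal.toReal_one]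
  have hν1 : (ν S).toReal + (ν Sᶜ).toReal = 1 := by
    rw [← ENNReal.toReal_add (measure_ne_top _ _) (measure_ne_top _ _),
      measure_add_measure_compl hS, measure_univ, ENNReal.toReal_one]
  have hmass : ν S + μ Sᶜ = ENNReal.ofReal (1 - d / 2) := by
    rw [show ν S = ENNReal.ofReal ((ν S).toReal) from
        (ENNReal.ofReal_toReal (measure_ne_top _ _)).symm,
      show μ Sᶜ = ENNReal.ofReal ((μ Sᶜ).toReal) from
        (ENNReal.ofReal_toReal (measure_ne_top _ _)).symm,
      ← ENNReal.ofReal_add ENNReal.toReal_nonneg ENNReal.toReal_nonneg]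
    congr 1
    linarith
  have hmass' : μ Sᶜ + ν S = ENNReal.ofReal (1 - d / 2) := by rw [add_comm]; exact hmass
  -- pointwise kernel bounds
  haveI : ∀ x, IsProbabilityMeasure (κ x) := fun x => inferInstance
  set K2 : ℝ := (1 - lam) * (d / 2) + (lam * d / 2) * (1 - d / 2) with hK2def
  have hK2nonneg : 0 ≤ K2 := by
    rw [hK2def]
    have h1 : 0 ≤ lam * d / 2 * (1 - d / 2) :=
      mul_nonneg (by positivity) (by linarith)
    have h2 : 0 ≤ (1 - lam) * (d / 2) := mul_nonneg (by linarith) (by linarith)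
    linarith
  haveI hbindμ : IsProbabilityMeasure (μ.bind ⇑κ) := bind_prob μ κ
  haveI hbindν : IsProbabilityMeasure (ν.bind ⇑η) := bind_prob ν η
  have hmain : ∀ A : Set E, MeasurableSet A →
      |((μ.bind ⇑κ) A).toReal - ((ν.bind ⇑η) A).toReal| ≤ K2 := by
    intro A hA
    have hpt1 : ∀ x y : E, κ x A ≤ η y A + ENNReal.ofReal ((2 * (1 - lam)) / 2) := fun x y =>
      ennreal_pt hA (by linarith) (hDobr μ ν hμ hν x y)
    have hpt1' : ∀ x y : E, η x A ≤ κ y A + ENNReal.ofReal ((2 * (1 - lam)) / 2) := fun x y =>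
      ennreal_pt hA (by linarith) (hDobr ν μ hν hμ x y)
    have hpt2 : ∀ x : E, κ x A ≤ η x A + ENNReal.ofReal ((lam * d) / 2) := fun x =>
      ennreal_pt hA (mul_nonneg hα0.le hd0) (hLip μ ν hμ hν x)
    have hpt2' : ∀ x : E, η x A ≤ κ x A + ENNReal.ofReal ((lam * d) / 2) := fun x =>
      ennreal_pt hA (mul_nonneg hα0.le hd0) (by
        have h := hLip ν μ hν hμ x; rwa [comm ν μ] at h)
    have hslack : ENNReal.ofReal ((2 * (1 - lam)) / 2) * ENNReal.ofReal (d / 2)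
        + ENNReal.ofReal ((lam * d) / 2) * ENNReal.ofReal (1 - d / 2)
        = ENNReal.ofReal K2 := by
      rw [← ENNReal.ofReal_mul (by linarith), ← ENNReal.ofReal_mul (by nlinarith),
        ← ENNReal.ofReal_add (by nlinarith) (by nlinarith [mul_nonneg (mul_nonneg hα0.le hd0) (by linarith : (0:ℝ) ≤ 1 - d/2)])]
      congr 1
      rw [hK2def]; ring
    have dir1 : (μ.bind ⇑κ) A ≤ (ν.bind ⇑η) A + ENNReal.ofReal K2 := by
      have := one_sided κ η hS hle1 hle2 hA _ _ hpt1 hpt2 hστ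
      rw [hσval, hmass] at this
      calc (μ.bind ⇑κ) A ≤ _ := this
        _ = (ν.bind ⇑η) A + ENNReal.ofReal K2 := by rw [add_assoc, hslack]
    have dir2 : (ν.bind ⇑η) A ≤ (μ.bind ⇑κ) A + ENNReal.ofReal K2 := by
      have hστ' : (ν.restrict Sᶜ - μ.restrict Sᶜ) Set.univ
          = (μ.restrict Sᶜᶜ - ν.restrict Sᶜᶜ) Set.univ := by
        rw [compl_compl, hτval, hσval]
      have hle1'' : ν.restrict Sᶜᶜ ≤ μ.restrict Sᶜᶜ := by rw [compl_compl]; exact hle1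
      have := one_sided (μ := ν) (ν := μ) η κ hS.compl hle2 hle1'' hA _ _ hpt1' hpt2' hστ'
      rw [hτval, compl_compl] at this
      calc (ν.bind ⇑η) A ≤ _ := this
        _ = (μ.bind ⇑κ) A + ENNReal.ofReal K2 := by rw [add_assoc, hmass', hslack]
    have t1 : ((μ.bind ⇑κ) A).toReal ≤ ((ν.bind ⇑η) A).toReal + K2 := by
      have := ENNReal.toReal_mono (by finiteness) dir1
      rwa [ENNReal.toReal_add (measure_ne_top _ _) ENNReal.ofReal_ne_top,
        ENNReal.toReal_ofReal hK2nonneg] at this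
    have t2 : ((ν.bind ⇑η) A).toReal ≤ ((μ.bind ⇑κ) A).toReal + K2 := by
      have := ENNReal.toReal_mono (by finiteness) dir2
      rwa [ENNReal.toReal_add (measure_ne_top _ _) ENNReal.ofReal_ne_top,
        ENNReal.toReal_ofReal hK2nonneg] at this
    rw [abs_le]; constructor <;> linarith
  have := dTV_le _ _ hmain
  calc dTV (μ.bind ⇑κ) (ν.bind ⇑η) ≤ 2 * K2 := this
    _ = d - lam * d ^ 2 / 2 := by rw [hK2def]; ring

end DTVaux

lemma arith_step {lam x k : ℝ} (hl : 0 < lam) (hk : 2 ≤ k) (hx0 : 0 ≤ x)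
    (hx : x ≤ 2 / (lam * k)) : x - lam * x ^ 2 / 2 ≤ 2 / (lam * (k + 1)) := by
  have hk0 : 0 < k := by linarith
  set a : ℝ := 2 / (lam * k) with ha
  set b : ℝ := 2 / (lam * (k + 1)) with hb
  have hla : lam * a = 2 / k := by rw [ha]; field_simp
  have hlb : lam * b = 2 / (k + 1) := by rw [hb]; field_simp
  have hla1 : lam * a ≤ 1 := by rw [hla, div_le_one hk0]; linarith
  have hlx : lam * x ≤ lam * a := by nlinarith
  have h1 : x - lam * x ^ 2 / 2 ≤ a - lam * a ^ 2 / 2 := by nlinarith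
  have h2 : a - lam * a ^ 2 / 2 ≤ b := by
    rw [← mul_le_mul_iff_right₀ hl]
    have e1 : lam * (a - lam * a ^ 2 / 2) = lam * a - (lam * a) ^ 2 / 2 := by ring
    rw [e1, hla, hlb]
    have e2 : 2 / k - (2 / k) ^ 2 / 2 = (2 * k - 2) / k ^ 2 := by field_simp
    rw [e2, div_le_div_iff₀ (by positivity) (by positivity)]
    nlinarith
  linarith

lemma arith_max {lam x : ℝ} (hl : 0 < lam) : x - lam * x ^ 2 / 2 ≤ 1 / (2 * lam) := by
  rw [le_div_iff₀ (by positivity)]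
  nlinarith [sq_nonneg (lam * x - 1)]

/-- Under the global nonlinear Dobrushin condition with constant `α ∈ (0,1]` and the
measure-Lipschitz condition with constant `lam = α`, the marginal laws started from any
two initial distributions satisfy `d_TV(μ_n, ν_n) ≤ 2/(lam n)` for positive `n`. -/
theorem stmt7 {E : Type*} [MeasurableSpace E]
    (P : Measure E → Kernel E E) (hMarkov : ∀ μ, IsMarkovKernel (P μ))
    (α lam : ℝ) (hα0 : 0 < α) (hα1 : α ≤ 1) (hlamα : lam = α)
    (hDobr : ∀ μ ν : Measure E, IsProbabilityMeasure μ → IsProbabilityMeasure ν →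
      ∀ x y : E, dTV ((P μ) x) ((P ν) y) ≤ 2 * (1 - α))
    (hLip : ∀ μ ν : Measure E, IsProbabilityMeasure μ → IsProbabilityMeasure ν →
      ∀ x : E, dTV ((P μ) x) ((P ν) x) ≤ lam * dTV μ ν)
    (μ ν : Measure E) (hμ : IsProbabilityMeasure μ) (hν : IsProbabilityMeasure ν)
    (μseq νseq : ℕ → Measure E) (hμ0 : μseq 0 = μ) (hν0 : νseq 0 = ν)
    (hμS : ∀ k : ℕ, μseq (k + 1) = (μseq k).bind ⇑(P (μseq k)))
    (hνS : ∀ k : ℕ, νseq (k + 1) = (νseq k).bind ⇑(P (νseq k))) :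
    ∀ n : ℕ, 0 < n → dTV (μseq n) (νseq n) ≤ 2 / (lam * n) := by
  subst hlamα
  have hprob : ∀ n, IsProbabilityMeasure (μseq n) ∧ IsProbabilityMeasure (νseq n) := by
    intro n
    induction n with
    | zero => rw [hμ0, hν0]; exact ⟨hμ, hν⟩
    | succ k ih =>
      rw [hμS, hνS]
      haveI := ih.1; haveI := ih.2
      haveI := hMarkov (μseq k); haveI := hMarkov (νseq k)
      exact ⟨DTVaux.bind_prob _ _, DTVaux.bind_prob _ _⟩
  have hrec : ∀ k : ℕ, dTV (μseq (k + 1)) (νseq (k + 1))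
      ≤ dTV (μseq k) (νseq k) - lam * (dTV (μseq k) (νseq k)) ^ 2 / 2 := by
    intro k
    haveI := (hprob k).1; haveI := (hprob k).2
    rw [hμS, hνS]
    exact DTVaux.step P hMarkov lam lam hα0 hα1 rfl hDobr hLip _ _
  intro n
  induction n with
  | zero => intro h; omega
  | succ k ih =>
    intro _
    haveI := (hprob k).1; haveI := (hprob k).2
    haveI := (hprob (k + 1)).1; haveI := (hprob (k + 1)).2
    have hd0 : 0 ≤ dTV (μseq k) (νseq k) := DTVaux.nonneg _ _
    have hr := hrec k
    rcases Nat.lt_or_ge k 2 with hk2 | hk2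
    · interval_cases k
      · have h2 : dTV (μseq 1) (νseq 1) ≤ 2 := DTVaux.le_two _ _
        have h3 : (2:ℝ) ≤ 2 / (lam * ((1:ℕ):ℝ)) := by
          push_cast
          rw [mul_one, le_div_iff₀ hα0]
          nlinarith
        linarith
      · have hmax := arith_max (x := dTV (μseq 1) (νseq 1)) hα0
        have h4 : (1:ℝ) / (2 * lam) ≤ 2 / (lam * ((2:ℕ):ℝ)) := by
          push_cast
          rw [div_le_div_iff₀ (by positivity) (by positivity)]
          nlinarith
        linarith
    · have ihk := ih (by omega)
      have harith := arith_step (x := dTV (μseq k) (νseq k)) (k := (k:ℝ)) hα0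
        (by exact_mod_cast hk2) hd0 ihk
      push_cast
      push_cast at harith
      linarith
end

section
/- Fix γ ∈ (0,1) and consider the nonlinear Markov chain on E = {1,2} with transition kernel P_ν(i,1) = (ν({2}) ∧ (1 − γ/2)) ∨ (γ/2) and P_ν(i,2) = (ν({1}) ∧ (1 − γ/2)) ∨ (γ/2) for i = 1,2. For a ∈ [γ/2, 1 − γ/2] let μ₀(a) = a δ₁ + (1 − a) δ₂ and define μ_{n+1} = P_{μ_n} μ_n. Then μ_n = a δ₁ + (1 − a) δ₂ for even n and μ_n = (1 − a) δ₁ + a δ₂ for odd n. Consequently, if a ≠ 1/2, then μ_n does not converge to the stationary measure π = (δ₁ + δ₂)/2 as n → ∞ (in particular d_TV(μ_n, π) = |2a − 1| for all n). -/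
open MeasureTheory ProbabilityTheory
open scoped ENNReal

/-- The measure `b δ₀ + (1-b) δ₁` on `Fin 2`. -/
noncomputable def mu2 (b : ℝ) : Measure (Fin 2) :=
  ENNReal.ofReal b • Measure.dirac (0 : Fin 2)
    + ENNReal.ofReal (1 - b) • Measure.dirac (1 : Fin 2)

lemma fin2_set_cases (s : Set (Fin 2)) :
    s = ∅ ∨ s = {0} ∨ s = {1} ∨ s = Set.univ := by
  by_cases h0 : (0 : Fin 2) ∈ s <;> by_cases h1 : (1 : Fin 2) ∈ s
  · right; right; right; ext x; fin_cases x <;> simp [h0, h1]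
  · right; left; ext x; fin_cases x <;> simp [h0, h1]
  · right; right; left; ext x; fin_cases x <;> simp [h0, h1]
  · left; ext x; fin_cases x <;> simp [h0, h1]

lemma fin2_ext {μ ν : Measure (Fin 2)} (h0 : μ {0} = ν {0}) (h1 : μ {1} = ν {1}) :
    μ = ν := by
  have huniv : (Set.univ : Set (Fin 2)) = {0} ∪ {1} := by
    ext x; fin_cases x <;> simp
  ext s hs
  rcases fin2_set_cases s with rfl | rfl | rfl | rfl
  · simp
  · exact h0
  · exact h1
  · rw [huniv, measure_union (by simp) (measurableSet_singleton 1),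
      measure_union (by simp) (measurableSet_singleton 1), h0, h1]

lemma mu2_apply0 (b : ℝ) : mu2 b {0} = ENNReal.ofReal b := by
  simp [mu2, Measure.dirac_apply]

lemma mu2_apply1 (b : ℝ) : mu2 b {1} = ENNReal.ofReal (1 - b) := by
  simp [mu2, Measure.dirac_apply]

lemma mu2_prob (b : ℝ) (h0 : 0 ≤ b) (h1 : b ≤ 1) : IsProbabilityMeasure (mu2 b) := by
  constructor
  simp only [mu2, Measure.add_apply, Measure.smul_apply, smul_eq_mul,
    Measure.dirac_apply, Set.mem_univ, Set.indicator_of_mem, Pi.one_apply, mul_one]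
  rw [← ENNReal.ofReal_add h0 (by linarith)]
  norm_num

lemma step_lemma (γ : ℝ) (hγ0 : 0 < γ)
    (P : Measure (Fin 2) → Kernel (Fin 2) (Fin 2)) (hMarkov : ∀ μ, IsMarkovKernel (P μ))
    (hPdef : ∀ ν : Measure (Fin 2), IsProbabilityMeasure ν → ∀ i : Fin 2,
      (((P ν) i {0}).toReal = max (min ((ν {1}).toReal) (1 - γ / 2)) (γ / 2)) ∧
      (((P ν) i {1}).toReal = max (min ((ν {0}).toReal) (1 - γ / 2)) (γ / 2)))
    (b : ℝ) (hb1 : γ / 2 ≤ b) (hb2 : b ≤ 1 - γ / 2) :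
    (mu2 b).bind ⇑(P (mu2 b)) = mu2 (1 - b) := by
  have hb0 : 0 ≤ b := le_trans (by linarith) hb1
  have hb1' : b ≤ 1 := by linarith
  have hprob := mu2_prob b hb0 hb1'
  have h := hPdef (mu2 b) hprob
  have _ := hMarkov (mu2 b)
  have hk0 : ∀ i, (P (mu2 b)) i {0} = ENNReal.ofReal (1 - b) := by
    intro i
    have hne : (P (mu2 b)) i {0} ≠ ⊤ := measure_ne_top _ _
    have h1 := (h i).1
    rw [mu2_apply1 b, ENNReal.toReal_ofReal (by linarith)] at h1
    rw [min_eq_left (by linarith), max_eq_left (by linarith)] at h1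
    rw [← ENNReal.ofReal_toReal hne, h1]
  have hk1 : ∀ i, (P (mu2 b)) i {1} = ENNReal.ofReal b := by
    intro i
    have hne : (P (mu2 b)) i {1} ≠ ⊤ := measure_ne_top _ _
    have h1 := (h i).2
    rw [mu2_apply0 b, ENNReal.toReal_ofReal hb0] at h1
    rw [min_eq_left (by linarith), max_eq_left (by linarith)] at h1
    rw [← ENNReal.ofReal_toReal hne, h1]
  have huniv : mu2 b Set.univ = 1 := hprob.measure_univ
  apply fin2_ext
  · rw [Measure.bind_apply (measurableSet_singleton 0) (Kernel.measurable _).aemeasurable]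
    rw [lintegral_congr hk0, lintegral_const, huniv, mul_one, mu2_apply0]
  · rw [Measure.bind_apply (measurableSet_singleton 1) (Kernel.measurable _).aemeasurable]
    rw [lintegral_congr hk1, lintegral_const, huniv, mul_one, mu2_apply1]
    congr 1; ring

lemma dTV_mu2 (b : ℝ) (h0 : 0 ≤ b) (h1 : b ≤ 1) :
    dTV (mu2 b) ((2 : ℝ≥0∞)⁻¹ • (Measure.dirac (0 : Fin 2) + Measure.dirac (1 : Fin 2)))
      = |2 * b - 1| := by
  set π : Measure (Fin 2) :=
    (2 : ℝ≥0∞)⁻¹ • (Measure.dirac (0 : Fin 2) + Measure.dirac (1 : Fin 2)) with hπ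
  have hπ0 : (π {0}).toReal = 1 / 2 := by
    simp [hπ, Measure.smul_apply, Measure.dirac_apply]
  have hπ1 : (π {1}).toReal = 1 / 2 := by
    simp [hπ, Measure.smul_apply, Measure.dirac_apply]
  have hπu : (π Set.univ).toReal = 1 := by
    simp [hπ, Measure.smul_apply, Measure.dirac_apply]
    rw [ENNReal.inv_two_add_inv_two]
    simp
  have hmu0 : ((mu2 b) {0}).toReal = b := by
    rw [mu2_apply0, ENNReal.toReal_ofReal h0]
  have hmu1 : ((mu2 b) {1}).toReal = 1 - b := by
    rw [mu2_apply1, ENNReal.toReal_ofReal (by linarith)]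
  have hmuu : ((mu2 b) Set.univ).toReal = 1 := by
    rw [(mu2_prob b h0 h1).measure_univ]; simp
  have key : ∀ A : {A : Set (Fin 2) // MeasurableSet A},
      |((mu2 b) A.1).toReal - (π A.1).toReal| ≤ |b - 1 / 2| := by
    rintro ⟨A, hA⟩
    rcases fin2_set_cases A with rfl | rfl | rfl | rfl
    · simp
    · rw [hmu0, hπ0]
    · rw [hmu1, hπ1]
      rw [show 1 - b - 1 / 2 = -(b - 1 / 2) by ring, abs_neg]
    · rw [hmuu, hπu]
      simp
  have hbdd : BddAbove (Set.range fun A : {A : Set (Fin 2) // MeasurableSet A} =>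
      |((mu2 b) A.1).toReal - (π A.1).toReal|) := ⟨|b - 1 / 2|, by
    rintro x ⟨A, rfl⟩; exact key A⟩
  have hsup : (⨆ A : {A : Set (Fin 2) // MeasurableSet A},
      |((mu2 b) A.1).toReal - (π A.1).toReal|) = |b - 1 / 2| := by
    apply le_antisymm (ciSup_le key)
    have := le_ciSup hbdd (⟨{0}, measurableSet_singleton 0⟩ :
      {A : Set (Fin 2) // MeasurableSet A})
    rwa [hmu0, hπ0] at this
  rw [dTV, hsup, show (2 : ℝ) * b - 1 = 2 * (b - 1 / 2) by ring, abs_mul]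
  norm_num

/-- The two-point example: on `E = {1,2}` (encoded as `Fin 2`, `0 ↔ 1`, `1 ↔ 2`), for the
kernel `P_ν(i,1) = (ν({2}) ∧ (1−γ/2)) ∨ (γ/2)`, `P_ν(i,2) = (ν({1}) ∧ (1−γ/2)) ∨ (γ/2)`
and initial distribution `μ₀(a) = a δ₁ + (1−a) δ₂` with `a ∈ [γ/2, 1−γ/2]`, the marginals
oscillate: `μ_n = a δ₁ + (1−a) δ₂` for even `n`, `μ_n = (1−a) δ₁ + a δ₂` for odd `n`;
hence `d_TV(μ_n, π) = |2a − 1|` for all `n`, where `π = (δ₁+δ₂)/2`, and if `a ≠ 1/2`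
then `μ_n` does not converge to `π` in total variation. -/
theorem stmt9 (γ : ℝ) (hγ0 : 0 < γ) (hγ1 : γ < 1)
    (P : Measure (Fin 2) → Kernel (Fin 2) (Fin 2)) (hMarkov : ∀ μ, IsMarkovKernel (P μ))
    (hPdef : ∀ ν : Measure (Fin 2), IsProbabilityMeasure ν → ∀ i : Fin 2,
      (((P ν) i {0}).toReal = max (min ((ν {1}).toReal) (1 - γ / 2)) (γ / 2)) ∧
      (((P ν) i {1}).toReal = max (min ((ν {0}).toReal) (1 - γ / 2)) (γ / 2)))
    (a : ℝ) (ha1 : γ / 2 ≤ a) (ha2 : a ≤ 1 - γ / 2)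
    (seq : ℕ → Measure (Fin 2))
    (hseq0 : seq 0 = ENNReal.ofReal a • Measure.dirac (0 : Fin 2)
      + ENNReal.ofReal (1 - a) • Measure.dirac (1 : Fin 2))
    (hseqS : ∀ n : ℕ, seq (n + 1) = (seq n).bind ⇑(P (seq n))) :
    (∀ n : ℕ, Even n → seq n = ENNReal.ofReal a • Measure.dirac (0 : Fin 2)
      + ENNReal.ofReal (1 - a) • Measure.dirac (1 : Fin 2)) ∧
    (∀ n : ℕ, Odd n → seq n = ENNReal.ofReal (1 - a) • Measure.dirac (0 : Fin 2)
      + ENNReal.ofReal a • Measure.dirac (1 : Fin 2)) ∧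
    (∀ n : ℕ, dTV (seq n)
      ((2 : ℝ≥0∞)⁻¹ • (Measure.dirac (0 : Fin 2) + Measure.dirac (1 : Fin 2)))
      = |2 * a - 1|) ∧
    (a ≠ 1 / 2 → ¬ Filter.Tendsto
      (fun n : ℕ => dTV (seq n)
        ((2 : ℝ≥0∞)⁻¹ • (Measure.dirac (0 : Fin 2) + Measure.dirac (1 : Fin 2))))
      Filter.atTop (nhds 0)) := by
  have ha0 : 0 ≤ a := le_trans (by linarith) ha1
  have key : ∀ n, (Even n → seq n = mu2 a) ∧ (Odd n → seq n = mu2 (1 - a)) := by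
    intro n
    induction n with
    | zero =>
      refine ⟨fun _ => ?_, fun h => absurd h (by simp)⟩
      rw [hseq0]; rfl
    | succ n ih =>
      constructor
      · intro he
        have ho : Odd n := Nat.Even.sub_odd (by omega) he odd_one
        rw [hseqS n, ih.2 ho,
          step_lemma γ hγ0 P hMarkov hPdef (1 - a) (by linarith) (by linarith),
          show (1 : ℝ) - (1 - a) = a by ring]
      · intro ho
        have he : Even n := by
          rcases Nat.even_or_odd n with h | h
          · exact h
          · exact absurd ho (by simp [Nat.even_add_one, Nat.not_even_iff_odd.mpr h,
              ← Nat.not_even_iff_odd])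
        rw [hseqS n, ih.1 he, step_lemma γ hγ0 P hMarkov hPdef a ha1 ha2]
  have part3 : ∀ n, dTV (seq n)
      ((2 : ℝ≥0∞)⁻¹ • (Measure.dirac (0 : Fin 2) + Measure.dirac (1 : Fin 2)))
      = |2 * a - 1| := by
    intro n
    rcases Nat.even_or_odd n with he | ho
    · rw [(key n).1 he, dTV_mu2 a ha0 (by linarith)]
    · rw [(key n).2 ho, dTV_mu2 (1 - a) (by linarith) (by linarith),
        show (2 : ℝ) * (1 - a) - 1 = -(2 * a - 1) by ring, abs_neg]
  refine ⟨fun n hn => ?_, fun n hn => ?_, part3, ?_⟩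
  · rw [(key n).1 hn]; rfl
  · rw [(key n).2 hn, mu2, show (1 : ℝ) - (1 - a) = a by ring]
  · intro hne h
    have h' : Filter.Tendsto (fun _ : ℕ => |2 * a - 1|) Filter.atTop (nhds 0) := by
      simpa only [part3] using h
    have h0 := tendsto_nhds_unique h' tendsto_const_nhds
    have : 2 * a - 1 = 0 := abs_eq_zero.mp h0.symm
    exact hne (by linarith)
end

section
/- Fix 0 < α < λ ≤ 1 and consider the nonlinear Markov chain on E = {1,2} whose transition kernel has rows, for i = 1,2: P_ν(1,1) = ((1 − λν({2})) ∧ (1 − α/2)) ∨ (1 − λ + α/2), P_ν(1,2) = (λν({2}) ∧ (λ − α/2)) ∨ (α/2), P_ν(2,1) = (λν({1}) ∧ (λ − α/2)) ∨ (α/2), P_ν(2,2) = ((1 − λν({1})) ∧ (1 − α/2)) ∨ (1 − λ + α/2). Then (a) P_μ(i,j) ≥ α/2 for all i,j ∈ E and μ ∈ 𝒫(E), and consequently the family satisfies the global nonlinear Dobrushin condition with constant α; and (b) for all i ∈ E and μ,ν ∈ 𝒫(E), |P_μ(i,1) − P_ν(i,1)| + |P_μ(i,2) − P_ν(i,2)|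 ≤ λ d_TV(μ,ν), i.e. the family satisfies the measure-Lipschitz condition with constant λ. -/
open MeasureTheory ProbabilityTheory
open scoped ENNReal

private lemma fin2_eq (i : Fin 2) : i = 0 ∨ i = 1 := by omega

private lemma set_fin2 (A : Set (Fin 2)) :
    A = ∅ ∨ A = {0} ∨ A = {1} ∨ A = Set.univ := by
  by_cases h0 : (0 : Fin 2) ∈ A <;> by_cases h1 : (1 : Fin 2) ∈ A
  · right; right; right; ext x; fin_cases x <;> simp [h0, h1]
  · right; left; ext x; fin_cases x <;> simp [h0, h1]
  · right; right; left; ext x; fin_cases x <;> simp [h0, h1]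
  · left; ext x; fin_cases x <;> simp [h0, h1]

private lemma toReal_le_one (μ : Measure (Fin 2)) [IsProbabilityMeasure μ]
    (A : Set (Fin 2)) : (μ A).toReal ≤ 1 := by
  have := prob_le_one (μ := μ) (s := A)
  calc (μ A).toReal ≤ (1 : ℝ≥0∞).toReal := ENNReal.toReal_mono (by simp) this
    _ = 1 := by simp

private lemma dTV_le_of (μ ν : Measure (Fin 2)) [IsProbabilityMeasure μ]
    [IsProbabilityMeasure ν] (c : ℝ) (hc : 0 ≤ c)
    (h0 : |(μ {0}).toReal - (ν {0}).toReal| ≤ c)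
    (h1 : |(μ {1}).toReal - (ν {1}).toReal| ≤ c) : dTV μ ν ≤ 2 * c := by
  unfold dTV
  have : Nonempty {A : Set (Fin 2) // MeasurableSet A} := ⟨⟨∅, trivial⟩⟩
  gcongr
  refine ciSup_le fun A => ?_
  rcases set_fin2 A.1 with h | h | h | h <;> rw [h] <;> simp_all

private lemma le_dTV (μ ν : Measure (Fin 2)) [IsProbabilityMeasure μ]
    [IsProbabilityMeasure ν] (A : Set (Fin 2)) :
    2 * |(μ A).toReal - (ν A).toReal| ≤ dTV μ ν := by
  unfold dTV
  gcongr
  refine le_ciSup_of_le ⟨1, ?_⟩ ⟨A, trivial⟩ le_rfl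
  rintro x ⟨B, rfl⟩
  have h1 := toReal_le_one μ B.1
  have h2 := toReal_le_one ν B.1
  have h3 : 0 ≤ (μ B.1).toReal := ENNReal.toReal_nonneg
  have h4 : 0 ≤ (ν B.1).toReal := ENNReal.toReal_nonneg
  rw [abs_le]; constructor <;> linarith

private lemma abs_min_sub_min (a b c : ℝ) : |min a c - min b c| ≤ |a - b| := by
  rcases le_total a c with h | h <;> rcases le_total b c with h' | h' <;>
    simp [min_eq_left, min_eq_right, h, h'] <;> rw [abs_le] <;>
    constructor <;> [skip; skip; skip; skip] <;>
    cases abs_le.1 (le_refl |a - b|) <;> linarith [le_abs_self (a - b), neg_abs_le (a - b)]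

private lemma clamp_lip (a b c d : ℝ) :
    |max (min a c) d - max (min b c) d| ≤ |a - b| :=
  (abs_max_sub_max_le_abs _ _ _).trans (abs_min_sub_min a b c)

/-- The two-point counterexample kernel (states `{1,2}` encoded as `Fin 2`, `0 ↔ 1`,
`1 ↔ 2`), for `0 < α < lam ≤ 1`:
`P_ν(1,1) = ((1−lam·ν({2})) ∧ (1−α/2)) ∨ (1−lam+α/2)`,
`P_ν(1,2) = (lam·ν({2}) ∧ (lam−α/2)) ∨ (α/2)`,
`P_ν(2,1) = (lam·ν({1}) ∧ (lam−α/2)) ∨ (α/2)`,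
`P_ν(2,2) = ((1−lam·ν({1})) ∧ (1−α/2)) ∨ (1−lam+α/2)`.
(a) All entries are `≥ α/2` and the family satisfies the global nonlinear Dobrushin
condition with constant `α`; (b) the family satisfies the measure-Lipschitz condition
with constant `lam`. -/
theorem stmt10 (α lam : ℝ) (hα0 : 0 < α) (hαlam : α < lam) (hlam1 : lam ≤ 1)
    (P : Measure (Fin 2) → Kernel (Fin 2) (Fin 2)) (hMarkov : ∀ μ, IsMarkovKernel (P μ))
    (hPdef : ∀ ν : Measure (Fin 2), IsProbabilityMeasure ν →
      (((P ν) 0 {0}).toReal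
          = max (min (1 - lam * (ν {1}).toReal) (1 - α / 2)) (1 - lam + α / 2)) ∧
      (((P ν) 0 {1}).toReal
          = max (min (lam * (ν {1}).toReal) (lam - α / 2)) (α / 2)) ∧
      (((P ν) 1 {0}).toReal
          = max (min (lam * (ν {0}).toReal) (lam - α / 2)) (α / 2)) ∧
      (((P ν) 1 {1}).toReal
          = max (min (1 - lam * (ν {0}).toReal) (1 - α / 2)) (1 - lam + α / 2))) :
    ((∀ μ : Measure (Fin 2), IsProbabilityMeasure μ →
        ∀ i j : Fin 2, α / 2 ≤ (((P μ) i {j}).toReal)) ∧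
      (∀ μ ν : Measure (Fin 2), IsProbabilityMeasure μ → IsProbabilityMeasure ν →
        ∀ x y : Fin 2, dTV ((P μ) x) ((P ν) y) ≤ 2 * (1 - α))) ∧
    ((∀ μ ν : Measure (Fin 2), IsProbabilityMeasure μ → IsProbabilityMeasure ν →
        ∀ i : Fin 2,
          |((P μ) i {0}).toReal - ((P ν) i {0}).toReal|
            + |((P μ) i {1}).toReal - ((P ν) i {1}).toReal| ≤ lam * dTV μ ν) ∧
      (∀ μ ν : Measure (Fin 2), IsProbabilityMeasure μ → IsProbabilityMeasure ν →
        ∀ i : Fin 2, dTV ((P μ) i) ((P ν) i) ≤ lam * dTV μ ν)) := by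
  -- lower and upper bounds on entries
  have hlow : ∀ μ : Measure (Fin 2), IsProbabilityMeasure μ →
      ∀ i j : Fin 2, α / 2 ≤ (((P μ) i {j}).toReal) := by
    intro μ hμ i j
    obtain ⟨h00, h01, h10, h11⟩ := hPdef μ hμ
    rcases fin2_eq i with rfl | rfl <;> rcases fin2_eq j with rfl | rfl <;>
      simp only [h00, h01, h10, h11, le_max_iff] <;> right <;> linarith
  have hup : ∀ μ : Measure (Fin 2), IsProbabilityMeasure μ →
      ∀ i j : Fin 2, (((P μ) i {j}).toReal) ≤ 1 - α / 2 := by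
    intro μ hμ i j
    obtain ⟨h00, h01, h10, h11⟩ := hPdef μ hμ
    rcases fin2_eq i with rfl | rfl <;> rcases fin2_eq j with rfl | rfl <;>
      simp only [h00, h01, h10, h11] <;> exact max_le ((min_le_right _ _).trans (by linarith)) (by linarith)
  -- measure-Lipschitz bound on each entry
  have hlip : ∀ μ ν : Measure (Fin 2), IsProbabilityMeasure μ → IsProbabilityMeasure ν →
      ∀ i j : Fin 2, ∃ A : Set (Fin 2),
        |((P μ) i {j}).toReal - ((P ν) i {j}).toReal|
          ≤ lam * |(μ A).toReal - (ν A).toReal| := by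
    intro μ ν hμ hν i j
    obtain ⟨h00, h01, h10, h11⟩ := hPdef μ hμ
    obtain ⟨g00, g01, g10, g11⟩ := hPdef ν hν
    have hlam0 : (0:ℝ) ≤ lam := by linarith
    rcases fin2_eq i with rfl | rfl <;> rcases fin2_eq j with rfl | rfl
    · refine ⟨{1}, ?_⟩
      rw [h00, g00]
      calc _ ≤ |(1 - lam * (μ {1}).toReal) - (1 - lam * (ν {1}).toReal)| := clamp_lip ..
        _ = lam * |(μ {1}).toReal - (ν {1}).toReal| := by
            rw [show (1 - lam * (μ {1}).toReal) - (1 - lam * (ν {1}).toReal)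
                = lam * ((ν {1}).toReal - (μ {1}).toReal) from by ring, abs_mul,
              abs_of_nonneg hlam0, abs_sub_comm]
    · refine ⟨{1}, ?_⟩
      rw [h01, g01]
      calc _ ≤ |lam * (μ {1}).toReal - lam * (ν {1}).toReal| := clamp_lip ..
        _ = lam * |(μ {1}).toReal - (ν {1}).toReal| := by
            rw [← mul_sub, abs_mul, abs_of_nonneg hlam0]
    · refine ⟨{0}, ?_⟩
      rw [h10, g10]
      calc _ ≤ |lam * (μ {0}).toReal - lam * (ν {0}).toReal| := clamp_lip ..
        _ = lam * |(μ {0}).toReal - (ν {0}).toReal| := by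
            rw [← mul_sub, abs_mul, abs_of_nonneg hlam0]
    · refine ⟨{0}, ?_⟩
      rw [h11, g11]
      calc _ ≤ |(1 - lam * (μ {0}).toReal) - (1 - lam * (ν {0}).toReal)| := clamp_lip ..
        _ = lam * |(μ {0}).toReal - (ν {0}).toReal| := by
            rw [show (1 - lam * (μ {0}).toReal) - (1 - lam * (ν {0}).toReal)
                = lam * ((ν {0}).toReal - (μ {0}).toReal) from by ring, abs_mul,
              abs_of_nonneg hlam0, abs_sub_comm]
  have hlam0 : (0:ℝ) ≤ lam := by linarith
  refine ⟨⟨hlow, ?_⟩, ?_, ?_⟩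
  · -- Dobrushin
    intro μ ν hμ hν x y
    haveI := hMarkov μ; haveI := hMarkov ν
    refine dTV_le_of _ _ (1 - α) (by linarith) ?_ ?_ <;>
    · rw [abs_le]
      constructor <;>
        [linarith [hlow ν hν y 0, hup μ hμ x 0, hlow ν hν y 1, hup μ hμ x 1,
          hlow μ hμ x 0, hup ν hν y 0, hlow μ hμ x 1, hup ν hν y 1];
         linarith [hlow ν hν y 0, hup μ hμ x 0, hlow ν hν y 1, hup μ hμ x 1,
          hlow μ hμ x 0, hup ν hν y 0, hlow μ hμ x 1, hup ν hν y 1]]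
  · -- measure-Lipschitz, entrywise sum
    intro μ ν hμ hν i
    obtain ⟨A, hA⟩ := hlip μ ν hμ hν i 0
    obtain ⟨B, hB⟩ := hlip μ ν hμ hν i 1
    haveI := hμ; haveI := hν
    have h1 := le_dTV μ ν A
    have h2 := le_dTV μ ν B
    nlinarith [abs_nonneg ((μ A).toReal - (ν A).toReal),
      abs_nonneg ((μ B).toReal - (ν B).toReal)]
  · -- measure-Lipschitz, dTV version
    intro μ ν hμ hν i
    haveI := hμ; haveI := hν
    haveI := hMarkov μ; haveI := hMarkov ν
    obtain ⟨A, hA⟩ := hlip μ ν hμ hν i 0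
    obtain ⟨B, hB⟩ := hlip μ ν hμ hν i 1
    have h1 := le_dTV μ ν A
    have h2 := le_dTV μ ν B
    have hd : 0 ≤ dTV μ ν := le_trans (by positivity) h1
    have hc : |((P μ) i {0}).toReal - ((P ν) i {0}).toReal| ≤ lam * dTV μ ν / 2 := by
      nlinarith
    have hc' : |((P μ) i {1}).toReal - ((P ν) i {1}).toReal| ≤ lam * dTV μ ν / 2 := by
      nlinarith
    have := dTV_le_of ((P μ) i) ((P ν) i) (lam * dTV μ ν / 2) (by positivity) hc hc'
    linarith
end

section
/- Fix 0 < α < λ ≤ 1 and consider the nonlinear Markov chain on E = {1,2} with transition kernel P_ν(1,1) = ((1 − λν({2})) ∧ (1 − α/2)) ∨ (1 − λ + α/2), P_ν(1,2) = (λν({2}) ∧ (λ − α/2)) ∨ (α/2), P_ν(2,1) = (λν({1}) ∧ (λ − α/2)) ∨ (α/2), P_ν(2,2) = ((1 − λν({1})) ∧ (1 − α/2)) ∨ (1 − λ + α/2). Then for every a ∈ [α/(2λ), 1 − α/(2λ)], the measure μ(a) = a δ₁ + (1 − a) δ₂ is stationary: P_{μ(a)} μ(a) = μ(a). In particular this chain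 has a continuum of stationary measures. -/
open MeasureTheory ProbabilityTheory
open scoped ENNReal

/-- The two-point counterexample kernel (states `{1,2}` encoded as `Fin 2`, `0 ↔ 1`,
`1 ↔ 2`), for `0 < α < lam ≤ 1`: every measure `μ(a) = a δ₁ + (1−a) δ₂` with
`a ∈ [α/(2 lam), 1 − α/(2 lam)]` is stationary, so the chain has a continuum of
stationary measures. -/
theorem stmt11 (α lam : ℝ) (hα0 : 0 < α) (hαlam : α < lam) (hlam1 : lam ≤ 1)
    (P : Measure (Fin 2) → Kernel (Fin 2) (Fin 2)) (hMarkov : ∀ μ, IsMarkovKernel (P μ))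
    (hPdef : ∀ ν : Measure (Fin 2), IsProbabilityMeasure ν →
      (((P ν) 0 {0}).toReal
          = max (min (1 - lam * (ν {1}).toReal) (1 - α / 2)) (1 - lam + α / 2)) ∧
      (((P ν) 0 {1}).toReal
          = max (min (lam * (ν {1}).toReal) (lam - α / 2)) (α / 2)) ∧
      (((P ν) 1 {0}).toReal
          = max (min (lam * (ν {0}).toReal) (lam - α / 2)) (α / 2)) ∧
      (((P ν) 1 {1}).toReal
          = max (min (1 - lam * (ν {0}).toReal) (1 - α / 2)) (1 - lam + α / 2))) :
    ∀ a : ℝ, α / (2 * lam) ≤ a → a ≤ 1 - α / (2 * lam) →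
      (ENNReal.ofReal a • Measure.dirac (0 : Fin 2)
          + ENNReal.ofReal (1 - a) • Measure.dirac (1 : Fin 2)).bind
        ⇑(P (ENNReal.ofReal a • Measure.dirac (0 : Fin 2)
          + ENNReal.ofReal (1 - a) • Measure.dirac (1 : Fin 2)))
      = ENNReal.ofReal a • Measure.dirac (0 : Fin 2)
          + ENNReal.ofReal (1 - a) • Measure.dirac (1 : Fin 2) := by
  intro a ha1 ha2
  have hlam0 : 0 < lam := hα0.trans hαlam
  have hd : 0 < α / (2 * lam) := by positivity
  have ha0 : 0 < a := lt_of_lt_of_le hd ha1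
  have h1a : 0 < 1 - a := by nlinarith
  -- key real inequalities
  have hLa : α / 2 ≤ lam * a := by
    rw [div_le_iff₀ (by positivity)] at ha1; nlinarith
  have hL1a : α / 2 ≤ lam * (1 - a) := by
    have h : α / (2 * lam) ≤ 1 - a := by linarith
    rw [div_le_iff₀ (by positivity)] at h; nlinarith
  set μ : Measure (Fin 2) :=
    ENNReal.ofReal a • Measure.dirac (0 : Fin 2)
      + ENNReal.ofReal (1 - a) • Measure.dirac (1 : Fin 2) with hμ
  have hμ0 : μ {0} = ENNReal.ofReal a := by
    simp [hμ, Measure.dirac_apply' _ (measurableSet_singleton _)]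
  have hμ1 : μ {1} = ENNReal.ofReal (1 - a) := by
    simp [hμ, Measure.dirac_apply' _ (measurableSet_singleton _)]
  have hprob : IsProbabilityMeasure μ := by
    constructor
    have : μ Set.univ = ENNReal.ofReal a + ENNReal.ofReal (1 - a) := by
      simp [hμ]
    rw [this, ← ENNReal.ofReal_add ha0.le h1a.le]
    norm_num
  obtain ⟨h00, h01, h10, h11⟩ := hPdef μ hprob
  simp only [hμ0, hμ1, ENNReal.toReal_ofReal ha0.le,
    ENNReal.toReal_ofReal h1a.le] at h00 h01 h10 h11
  have e01 : ((P μ) 0 {1}).toReal = lam * (1 - a) := by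
    rw [h01, min_eq_left (by nlinarith), max_eq_left (by nlinarith)]
  have e00 : ((P μ) 0 {0}).toReal = 1 - lam * (1 - a) := by
    rw [h00, min_eq_left (by nlinarith), max_eq_left (by nlinarith)]
  have e10 : ((P μ) 1 {0}).toReal = lam * a := by
    rw [h10, min_eq_left (by nlinarith), max_eq_left (by nlinarith)]
  have e11 : ((P μ) 1 {1}).toReal = 1 - lam * a := by
    rw [h11, min_eq_left (by nlinarith), max_eq_left (by nlinarith)]
  have hM := hMarkov μ
  have hfin : ∀ (i : Fin 2) (s : Set (Fin 2)), (P μ) i s ≠ ⊤ := fun i s =>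
    measure_ne_top _ _
  have k01 : (P μ) 0 {1} = ENNReal.ofReal (lam * (1 - a)) := by
    rw [← e01, ENNReal.ofReal_toReal (hfin _ _)]
  have k00 : (P μ) 0 {0} = ENNReal.ofReal (1 - lam * (1 - a)) := by
    rw [← e00, ENNReal.ofReal_toReal (hfin _ _)]
  have k10 : (P μ) 1 {0} = ENNReal.ofReal (lam * a) := by
    rw [← e10, ENNReal.ofReal_toReal (hfin _ _)]
  have k11 : (P μ) 1 {1} = ENNReal.ofReal (1 - lam * a) := by
    rw [← e11, ENNReal.ofReal_toReal (hfin _ _)]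
  apply Measure.ext_of_singleton
  intro i
  have hbind : μ.bind ⇑(P μ) {i}
      = ENNReal.ofReal a * (P μ) 0 {i} + ENNReal.ofReal (1 - a) * (P μ) 1 {i} := by
    rw [Measure.bind_apply (measurableSet_singleton _) (Kernel.measurable _).aemeasurable]
    rw [hμ, lintegral_add_measure, lintegral_smul_measure, lintegral_smul_measure,
      lintegral_dirac, lintegral_dirac, smul_eq_mul, smul_eq_mul]
  have hq1 : 0 ≤ 1 - lam * a := by
    nlinarith [mul_le_one₀ hlam1 ha0.le (by linarith : a ≤ 1)]
  have hq2 : 0 ≤ 1 - lam * (1 - a) := by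
    nlinarith [mul_le_one₀ hlam1 h1a.le (by linarith : 1 - a ≤ 1)]
  fin_cases i
  · rw [hbind]
    simp only [Fin.zero_eta, Fin.isValue]
    rw [k00, k10, hμ0, ← ENNReal.ofReal_mul ha0.le, ← ENNReal.ofReal_mul h1a.le,
      ← ENNReal.ofReal_add (mul_nonneg ha0.le hq2)
        (mul_nonneg h1a.le (mul_nonneg hlam0.le ha0.le))]
    congr 1
    ring
  · rw [hbind]
    simp only [Fin.mk_one, Fin.isValue]
    rw [k01, k11, hμ1, ← ENNReal.ofReal_mul ha0.le, ← ENNReal.ofReal_mul h1a.le,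
      ← ENNReal.ofReal_add (mul_nonneg ha0.le (mul_nonneg hlam0.le h1a.le))
        (mul_nonneg h1a.le hq1)]
    congr 1
    ring
end
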